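/- Up to strong computable equivalence, f ⊞ g ≡_sc f ⊔ g for all partial multifunctions f, g on Cantor space; consequently the strong computable degrees form a distributive lattice with ⊔ as join and ⊓ as meet. -/

import Mathlib

attribute [local instance] Classical.propDecidable

namespace StrongWeihrauch

noncomputable section

/-! ### Cantor space, monotone approximations, and the evaluation map -/

/-- Cantor space `2^ω`; we identify subsets of `ω` with their characteristic functions. -/
abbrev Cantor : Type := ℕ → Bool

/-- The coded triple `⟨n,s,i⟩`. -/
def tpl (n s i : ℕ) : ℕ := Nat.pair n (Nat.pair s i)

/-- A monotone approximation (Definition 3.1): every element has the form `⟨n,s,i⟩` with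
`i < 2`; for each `n` there is at most one pair `(s,i)` with `⟨n,s,i⟩ ∈ a`; and the stages `s`
are strictly increasing in `n`. -/
def MonotoneApprox (a : Cantor) : Prop :=
  (∀ k, a k = true → ∃ n s i, i < 2 ∧ k = tpl n s i) ∧
  (∀ n s t i j, a (tpl n s i) = true → a (tpl n t j) = true → s = t ∧ i = j) ∧
  (∀ m n s t i j, a (tpl m s i) = true → a (tpl n t j) = true → m < n → s < t)

/-- A total monotone approximation: every `n` gets a value. -/
def TotalMonotoneApprox (a : Cantor) : Prop :=
  MonotoneApprox a ∧ ∀ n, ∃ s i, i < 2 ∧ a (tpl n s i) = true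

/-- The value of the evaluation map `e` on a (total) monotone approximation:
`eVal a n = i` iff `⟨n,s,i⟩ ∈ a` for some `s`. -/
def eVal (a : Cantor) : Cantor := fun n => decide (∃ s, a (tpl n s 1) = true)

/-- The evaluation map `e : ⊆ 2^ω → 2^ω`, the partial function whose domain is the set of
total monotone approximations `a`, with `e(a)(n) = i` iff `⟨n,s,i⟩ ∈ a` for some `s`. -/
def evalMA : Cantor →. Cantor := fun a => ⟨TotalMonotoneApprox a, fun _ => eVal a⟩

/-! ### Turing functionals -/

/-- The oracle information available at stage `s`: the first `s` bits of `p`. -/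
def initSeg (p : Cantor) (s : ℕ) : List Bool := (List.range s).map p

/-- A `{0,1}`-valued Turing functional on Cantor space, presented by a computable monotone
finite-prefix approximation: `approx σ n = some b` means that the computation on input `n`
with oracle prefix `σ` has converged, with output `b`. -/
structure TuringFunctional where
  approx : List Bool → ℕ → Option Bool
  computable : Computable₂ approx
  mono : ∀ σ τ n b, σ <+: τ → approx σ n = some b → approx τ n = some b

namespace TuringFunctional

/-- `Φ^p(n)[s]↓`. -/
def ConvAt (Φ : TuringFunctional) (p : Cantor) (n s : ℕ) : Prop :=
  (Φ.approx (initSeg p s) n).isSome = true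

/-- `s` is least such that `Φ^p(n)[s]↓`. -/
def LeastStage (Φ : TuringFunctional) (p : Cantor) (n s : ℕ) : Prop :=
  Φ.ConvAt p n s ∧ ∀ t, t < s → ¬ Φ.ConvAt p n t

/-- Convention 2.1: if `Φ^p(n)[s]↓` then `Φ^p(m)[s]↓` for all `m < n`, and for each `s`
there is at most one `n` for which `s` is least with `Φ^p(n)[s]↓`. -/
def Convention (Φ : TuringFunctional) : Prop :=
  (∀ (p : Cantor) (s n m : ℕ), m < n → Φ.ConvAt p n s → Φ.ConvAt p m s) ∧
  (∀ (p : Cantor) (s n n' : ℕ), Φ.LeastStage p n s → Φ.LeastStage p n' s → n = n')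

/-- The partial function `⊆ 2^ω → 2^ω` computed by `Φ`; it is defined at `p` exactly when
`Φ(p)` is total, in which case its value is the map `n ↦ Φ^p(n)`. -/
def eval (Φ : TuringFunctional) : Cantor →. Cantor :=
  fun p => ⟨∀ n, ∃ s b, Φ.approx (initSeg p s) n = some b,
    fun h n => (h n).choose_spec.choose⟩

end TuringFunctional

/-- `a_{Φ(p)}`: the set of all `⟨n,s,i⟩` where `s` is least such that `Φ^p(n)[s]↓ = i`. -/
def approxSeq (Φ : TuringFunctional) (p : Cantor) : Cantor := fun k =>
  decide (∃ n s b, k = tpl n s (Bool.toNat b) ∧ Φ.LeastStage p n s ∧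
    Φ.approx (initSeg p s) n = some b)

/-- Turing reducibility `q ≤_T p` on Cantor space. -/
def TuringLe (q p : Cantor) : Prop := ∃ Φ : TuringFunctional, Φ.eval p = Part.some q

/-! ### Pairing on Cantor space -/

/-- The effective join `⟨p,q⟩` on Cantor space. -/
def pairC (p q : Cantor) : Cantor := fun n => if n % 2 = 0 then p (n / 2) else q (n / 2)

def leftC (r : Cantor) : Cantor := fun n => r (2 * n)

def rightC (r : Cantor) : Cantor := fun n => r (2 * n + 1)

/-- The singleton `{i} ⊆ ω` as an element of Cantor space. -/
def natSet (i : ℕ) : Cantor := fun n => decide (n = i)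

/-- `⟨i,p⟩`, i.e. `⟨{i},p⟩`. -/
def inC (i : ℕ) (p : Cantor) : Cantor := pairC (natSet i) p

lemma leftC_pairC (p q : Cantor) : leftC (pairC p q) = p := by
  funext n
  have h1 : 2 * n % 2 = 0 := by omega
  have h2 : 2 * n / 2 = n := by omega
  simp [leftC, pairC, h1, h2]

lemma rightC_pairC (p q : Cantor) : rightC (pairC p q) = q := by
  funext n
  have h1 : (2 * n + 1) % 2 = 1 := by omega
  have h2 : (2 * n + 1) / 2 = n := by omega
  simp [rightC, pairC, h1, h2]

lemma tpl_inj {n s i n' s' i' : ℕ} (h : tpl n s i = tpl n' s' i') :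
    n = n' ∧ s = s' ∧ i = i' := by
  unfold tpl at h
  rw [Nat.pair_eq_pair] at h
  rcases h with ⟨h1, h2⟩
  rw [Nat.pair_eq_pair] at h2
  exact ⟨h1, h2.1, h2.2⟩

lemma toNat_lt_two (b : Bool) : b.toNat < 2 := by cases b <;> decide

/-- Encoding of `q ∈ 2^ω` as a total monotone approximation evaluating to `q`. -/
def maEncode (q : Cantor) : Cantor := fun k => decide (∃ n, k = tpl n n (q n).toNat)

lemma maEncode_mem {q : Cantor} {k : ℕ} :
    maEncode q k = true ↔ ∃ n, k = tpl n n (q n).toNat := by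
  simp [maEncode]

lemma maEncode_total (q : Cantor) : TotalMonotoneApprox (maEncode q) := by
  refine ⟨⟨?_, ?_, ?_⟩, ?_⟩
  · intro k hk
    obtain ⟨n, rfl⟩ := maEncode_mem.mp hk
    exact ⟨n, n, (q n).toNat, toNat_lt_two _, rfl⟩
  · intro n s t i j h1 h2
    obtain ⟨m, hm⟩ := maEncode_mem.mp h1
    obtain ⟨m', hm'⟩ := maEncode_mem.mp h2
    obtain ⟨e1, e2, e3⟩ := tpl_inj hm
    obtain ⟨f1, f2, f3⟩ := tpl_inj hm'
    have hmm' : m = m' := by omega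
    refine ⟨by omega, by rw [e3, f3, hmm']⟩
  · intro m n s t i j h1 h2 hmn
    obtain ⟨u, hu⟩ := maEncode_mem.mp h1
    obtain ⟨v, hv⟩ := maEncode_mem.mp h2
    obtain ⟨e1, e2, _⟩ := tpl_inj hu
    obtain ⟨f1, f2, _⟩ := tpl_inj hv
    omega
  · intro n
    exact ⟨n, (q n).toNat, toNat_lt_two _, maEncode_mem.mpr ⟨n, rfl⟩⟩

lemma eVal_maEncode (q : Cantor) : eVal (maEncode q) = q := by
  funext n
  have hiff : (∃ s, maEncode q (tpl n s 1) = true) ↔ q n = true := by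
    constructor
    · rintro ⟨s, hs⟩
      obtain ⟨m, hm⟩ := maEncode_mem.mp hs
      obtain ⟨e1, e2, e3⟩ := tpl_inj hm
      subst e1
      cases hq : q n
      · rw [hq] at e3; simp at e3
      · rfl
    · intro hq
      refine ⟨n, maEncode_mem.mpr ⟨n, ?_⟩⟩
      rw [hq]
      rfl
  cases hq : q n
  · have hne : ¬ (∃ s, maEncode q (tpl n s 1) = true) := by
      intro h
      have ht := hiff.mp h
      rw [ht] at hq
      exact Bool.noConfusion hq
    simp [eVal, hne]
  · simp [eVal, hiff.mpr hq]

/-- An explicit non-(monotone approximation). -/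
def badMA : Cantor := fun k => decide (k = tpl 0 0 0 ∨ k = tpl 0 1 0)

lemma badMA_not : ¬ TotalMonotoneApprox badMA := by
  rintro ⟨⟨-, h2, -⟩, -⟩
  have ha : badMA (tpl 0 0 0) = true := by simp [badMA]
  have hb : badMA (tpl 0 1 0) = true := by simp [badMA]
  have := (h2 0 0 1 0 0 ha hb).1
  omega

/-! ### Represented spaces -/

/-- A represented space: a set `X` together with a partial surjection `δ : ⊆ 2^ω → X`. -/
structure RepSp : Type 1 where
  X : Type
  δ : Cantor →. X
  surj : ∀ x : X, ∃ p, x ∈ δ p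

namespace RepSp

/-- The product representation of `X₀ × X₁`: `δ(⟨p₀,p₁⟩) = (δ₀(p₀), δ₁(p₁))`. -/
def prod (A B : RepSp) : RepSp where
  X := A.X × B.X
  δ := fun r => (A.δ (leftC r)).bind fun x => (B.δ (rightC r)).map fun y => (x, y)
  surj := by
    rintro ⟨x, y⟩
    obtain ⟨p, hp⟩ := A.surj x
    obtain ⟨q, hq⟩ := B.surj y
    refine ⟨pairC p q, ?_⟩
    simp only [leftC_pairC, rightC_pairC, Part.mem_bind_iff]
    exact ⟨x, hp, Part.mem_map _ hq⟩

/-- The disjoint-union representation of `X₀ ⊔ X₁`: `δ(⟨i,p⟩) = ⟨i, δᵢ(p)⟩`. -/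
def sum (A B : RepSp) : RepSp where
  X := A.X ⊕ B.X
  δ := fun r =>
    if leftC r = natSet 0 then (A.δ (rightC r)).map Sum.inl
    else if leftC r = natSet 1 then (B.δ (rightC r)).map Sum.inr
    else Part.none
  surj := by
    rintro (x | y)
    · obtain ⟨p, hp⟩ := A.surj x
      refine ⟨inC 0 p, ?_⟩
      have e1 : leftC (inC 0 p) = natSet 0 := leftC_pairC _ _
      have e2 : rightC (inC 0 p) = p := rightC_pairC _ _
      simp only [e1, e2, if_pos rfl]
      exact Part.mem_map _ hp
    · obtain ⟨p, hp⟩ := B.surj y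
      refine ⟨inC 1 p, ?_⟩
      have e1 : leftC (inC 1 p) = natSet 1 := leftC_pairC _ _
      have e2 : rightC (inC 1 p) = p := rightC_pairC _ _
      have hne : natSet 1 ≠ natSet 0 := by
        intro h
        have := congrFun h 0
        simp [natSet] at this
      simp only [e1, e2, hne, if_neg, if_pos rfl, ite_false, ite_true]
      exact Part.mem_map _ hp

/-- The completion `Ŷ = Y ∪ {∞_Y}` (with `∞_Y` rendered as `none`), represented by
`δ_Ŷ(p) = δ_Y(e(p))` if `p` is a total monotone approximation with `e(p) ∈ dom(δ_Y)`, and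
`δ_Ŷ(p) = ∞_Y` otherwise. -/
def hat (A : RepSp) : RepSp where
  X := Option A.X
  δ := fun p => Part.some (((evalMA p).bind A.δ).toOption)
  surj := by
    intro y
    match y with
    | none =>
        refine ⟨badMA, ?_⟩
        rw [Part.mem_some_iff]
        have hd : ¬ ((evalMA badMA).bind A.δ).Dom := by
          rintro ⟨h1, -⟩
          exact badMA_not h1
        rw [eq_comm, Part.toOption_eq_none_iff]
        exact hd
    | some x =>
        obtain ⟨p, hp⟩ := A.surj x
        refine ⟨maEncode p, ?_⟩
        rw [Part.mem_some_iff, eq_comm, Part.toOption_eq_some_iff]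
        exact Part.mem_bind (f := evalMA (maEncode p)) ⟨maEncode_total p, eVal_maEncode p⟩ hp

end RepSp

/-! ### Partial multifunctions and the Weihrauch reducibilities -/

/-- A partial multifunction `f : ⊆ X ⇉ Y` between represented spaces: `f.f x` is the set of
solutions of the instance `x`, and the domain of `f` is the set of `x` with `f.f x ≠ ∅`. -/
structure MFn : Type 1 where
  A : RepSp
  B : RepSp
  f : A.X → Set B.X

namespace MFn

/-- The coproduct `f ⊔ g`. -/
def sqcup (f g : MFn) : MFn where
  A := f.A.sum g.A
  B := f.B.sum g.B
  f := Sum.elim (fun x => Sum.inl '' f.f x) (fun y => Sum.inr '' g.f y)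

/-- The meet `f ⊓ g`, with `(f ⊓ g)(⟨x,y⟩) = ({0} × f(x)) ∪ ({1} × g(y))` for
`x ∈ dom f`, `y ∈ dom g`. -/
def sqcap (f g : MFn) : MFn where
  A := f.A.prod g.A
  B := f.B.sum g.B
  f := fun xy =>
    if (f.f xy.1).Nonempty ∧ (g.f xy.2).Nonempty then
      (Sum.inl '' f.f xy.1) ∪ (Sum.inr '' g.f xy.2)
    else ∅

/-- The join `f ⊞ g : ⊆ X₀ ⊔ X₁ ⇉ Ŷ₀ × Ŷ₁`, with `(f ⊞ g)(⟨0,x⟩) = f(x) × Ŷ₁` and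
`(f ⊞ g)(⟨1,x⟩) = Ŷ₀ × g(x)`. -/
def boxplus (f g : MFn) : MFn where
  A := f.A.sum g.A
  B := (f.B.hat).prod (g.B.hat)
  f := Sum.elim
    (fun x => (Option.some '' f.f x) ×ˢ (Set.univ : Set (Option g.B.X)))
    (fun y => (Set.univ : Set (Option f.B.X)) ×ˢ (Option.some '' g.f y))

end MFn

/-- `F ⊢ f`: the partial function `F : ⊆ 2^ω → 2^ω` is a realizer of `f`, i.e.
`δ_Y F(p) ∈ f δ_X(p)` for every `p ∈ dom(f δ_X)`. -/
def Realizes (F : Cantor →. Cantor) (f : MFn) : Prop :=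
  ∀ p x, x ∈ f.A.δ p → (f.f x).Nonempty →
    ∃ q ∈ F p, ∃ y ∈ f.B.δ q, y ∈ f.f x

/-- Composition of partial functions on Cantor space: `pcomp F G = F ∘ G`. -/
def pcomp (F G : Cantor →. Cantor) : Cantor →. Cantor := fun p => (G p).bind F

/-- Strong Weihrauch reducibility: `f ≤_sW g` iff there are Turing functionals `Φ, Ψ` with
`Ψ G Φ ⊢ f` for every `G ⊢ g`. -/
def sWLe (f g : MFn) : Prop :=
  ∃ Φ Ψ : TuringFunctional, ∀ G : Cantor →. Cantor, Realizes G g →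
    Realizes (pcomp Ψ.eval (pcomp G Φ.eval)) f

/-- Strong Weihrauch equivalence. -/
def sWEq (f g : MFn) : Prop := sWLe f g ∧ sWLe g f

/-- Weihrauch reducibility: `f ≤_W g` iff there are Turing functionals `Φ, Ψ` with
`Ψ⟨id, G Φ⟩ ⊢ f` for every `G ⊢ g`. -/
def wLe (f g : MFn) : Prop :=
  ∃ Φ Ψ : TuringFunctional, ∀ G : Cantor →. Cantor, Realizes G g →
    Realizes (fun p => (pcomp G Φ.eval p).bind fun q => Ψ.eval (pairC p q)) f

/-- Weihrauch equivalence. -/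
def wEq (f g : MFn) : Prop := wLe f g ∧ wLe g f

/-- Cantor space as a represented space, with the identity representation. -/
def CantorSp : RepSp where
  X := Cantor
  δ := fun p => Part.some p
  surj := fun p => ⟨p, Part.mem_some_iff.mpr rfl⟩

/-- A partial multifunction on Cantor space, viewed as a multifunction on represented
spaces via the identity representation. -/
def ofCantor (F : Cantor → Set Cantor) : MFn := ⟨CantorSp, CantorSp, F⟩

/-! ### Further definitions used in the statements -/

/-- `c` is an index for the Turing functional `Ψ`. -/
def codesTF (c : Nat.Partrec.Code) (Ψ : TuringFunctional) : Prop :=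
  ∀ (σ : List Bool) (n : ℕ),
    c.eval (Nat.pair (Encodable.encode σ) n) = Part.some (Encodable.encode (Ψ.approx σ n))

/-- The multifunction `h` of Lemma 4.4: `h(⟨0,p⟩)` consists of all pairs `⟨a,q⟩` where `a`
is a total monotone approximation with `e(a) ∈ F(p)`, and `h(⟨1,p⟩)` of all pairs `⟨q,a⟩`
where `a` is a total monotone approximation with `e(a) ∈ G(p)`. -/
def hJoin (F G : Cantor → Set Cantor) : Cantor → Set Cantor := fun r =>
  {z | leftC r = natSet 0 ∧
    ∃ a q, z = pairC a q ∧ TotalMonotoneApprox a ∧ eVal a ∈ F (rightC r)} ∪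
  {z | leftC r = natSet 1 ∧
    ∃ q a, z = pairC q a ∧ TotalMonotoneApprox a ∧ eVal a ∈ G (rightC r)}

/-- A single-valued partial function on Cantor space, viewed as a partial multifunction on
represented spaces (via the identity representation). -/
def pfnToM (F : Cantor →. Cantor) : MFn := ofCantor fun p => {q | q ∈ F p}

/-- The single-point partial function `{p} → {q}`. -/
def singleFn (p q : Cantor) : MFn := ofCantor fun r => if r = p then {q} else ∅

/-- `A` is Medvedev reducible to `B`. -/
def MedvedevLe (A B : Set Cantor) : Prop :=
  ∃ Φ : TuringFunctional, ∀ p ∈ B, ∃ q ∈ Φ.eval p, q ∈ A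

/-- The all-zero sequence `0^ω`. -/
def zeroSeq : Cantor := fun _ => false

/-- `d_A : A → {0^ω}`. -/
def dFn (A : Set Cantor) : MFn := ofCantor fun p => if p ∈ A then {zeroSeq} else ∅

/-- `A ⊔ B ⊆ 2^ω`: all `⟨i,p⟩` with `i < 2` and `p ∈ A` if `i = 0`, `p ∈ B` if `i = 1`. -/
def setSum (A B : Set Cantor) : Set Cantor :=
  {r | ∃ p ∈ A, r = inC 0 p} ∪ {r | ∃ p ∈ B, r = inC 1 p}

/-- `A × B ⊆ 2^ω`: all pairs `⟨p,q⟩` with `p ∈ A` and `q ∈ B`. -/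
def setProd (A B : Set Cantor) : Set Cantor := {r | ∃ p ∈ A, ∃ q ∈ B, r = pairC p q}

/-- `p` is a name of an instance of `f`. -/
def domName (f : MFn) (p : Cantor) : Prop := ∃ x ∈ f.A.δ p, (f.f x).Nonempty

/-- `q` is a name of a solution to the instance of `f` named by `p`. -/
def solName (f : MFn) (p q : Cantor) : Prop :=
  ∃ x ∈ f.A.δ p, ∃ y ∈ f.B.δ q, y ∈ f.f x

/-- Strong computable reducibility `f ≤_sc g`: every name `p` of an instance of `f`
computes a name `p'` of an instance of `g` such that every name of a solution to the
latter computes a name of a solution to the former. -/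
def scLe (f g : MFn) : Prop :=
  ∀ p, domName f p → ∃ p', TuringLe p' p ∧ domName g p' ∧
    ∀ q, solName g p' q → ∃ z, TuringLe z q ∧ solName f p z

/-- Strong computable equivalence. -/
def scEq (f g : MFn) : Prop := scLe f g ∧ scLe g f

/-! ### Infrastructure: lists, initSeg, eval -/

lemma get?_prefix {l₁ l₂ : List Bool} (h : l₁ <+: l₂) {n : ℕ} {b : Bool}
    (hb : l₁[n]? = some b) : l₂[n]? = some b := by
  obtain ⟨t, rfl⟩ := h
  have hn : n < l₁.length := by
    by_contra hn
    rw [List.getElem?_eq_none (le_of_not_gt hn)] at hb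
    cases hb
  rwa [List.getElem?_append_left hn]

lemma get?_prefix_lt {l₁ l₂ : List Bool} (h : l₁ <+: l₂) {n : ℕ}
    (hn : n < l₁.length) : l₂[n]? = l₁[n]? := by
  obtain ⟨t, rfl⟩ := h
  rw [List.getElem?_append_left hn]

@[simp] lemma initSeg_length (p : Cantor) (s : ℕ) : (initSeg p s).length = s := by
  simp [initSeg]

lemma initSeg_get? (p : Cantor) {k s : ℕ} (h : k < s) :
    (initSeg p s)[k]? = some (p k) := by
  rw [initSeg, List.getElem?_map]
  rw [List.getElem?_range h]
  rfl

lemma initSeg_prefix (p : Cantor) {s t : ℕ} (h : s ≤ t) :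
    initSeg p s <+: initSeg p t := by
  have : initSeg p s = (initSeg p t).take s := by
    rw [initSeg, initSeg, ← List.map_take, List.take_range, min_eq_left h]
  rw [this]
  exact List.take_prefix _ _

lemma initSeg_succ (p : Cantor) (s : ℕ) :
    initSeg p (s + 1) = initSeg p s ++ [p s] := by
  rw [initSeg, List.range_succ, List.map_append, initSeg]
  rfl

lemma initSeg_getD (p : Cantor) {k s : ℕ} (h : k < s) :
    (initSeg p s).getD k false = p k := by
  rw [List.getD_eq_getElem?_getD, initSeg_get? p h]
  rfl

namespace TuringFunctional

lemma eval_eq_some {Φ : TuringFunctional} {q z : Cantor}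
    (htot : ∀ n, ∃ s b, Φ.approx (initSeg q s) n = some b)
    (huni : ∀ n s b, Φ.approx (initSeg q s) n = some b → b = z n) :
    Φ.eval q = Part.some z := by
  apply Part.eq_some_iff.mpr
  refine ⟨htot, ?_⟩
  show (fun h : (∀ n, ∃ s b, Φ.approx (initSeg q s) n = some b) =>
    (fun n => (h n).choose_spec.choose : Cantor)) htot = z
  funext n
  exact huni n (htot n).choose (htot n).choose_spec.choose
    (htot n).choose_spec.choose_spec

lemma eval_spec {Φ : TuringFunctional} {q z : Cantor} (h : Φ.eval q = Part.some z) :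
    (∀ n, ∃ s b, Φ.approx (initSeg q s) n = some b) ∧
    (∀ n s b, Φ.approx (initSeg q s) n = some b → b = z n) := by
  obtain ⟨hd, hv⟩ := Part.eq_some_iff.mp h
  refine ⟨hd, fun n s b hb => ?_⟩
  have hv' : (hd n).choose_spec.choose = z n := congrFun hv n
  set s₀ := (hd n).choose with hs₀
  have hb₀ : Φ.approx (initSeg q s₀) n = some ((hd n).choose_spec.choose) :=
    (hd n).choose_spec.choose_spec
  have h1 : Φ.approx (initSeg q (max s s₀)) n = some b :=
    Φ.mono _ _ _ _ (initSeg_prefix q (le_max_left _ _)) hb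
  have h2 : Φ.approx (initSeg q (max s s₀)) n = some ((hd n).choose_spec.choose) :=
    Φ.mono _ _ _ _ (initSeg_prefix q (le_max_right _ _)) hb₀
  rw [h1] at h2
  rw [Option.some_inj.mp h2, hv']

end TuringFunctional
/-! ### Computability helpers -/

lemma primrec_beq : Primrec₂ Nat.beq := by
  have h : Primrec₂ fun a b : ℕ => @decide (a = b) (instDecidableEqNat a b) := by convert (Primrec.eq (α := ℕ)).decide
  exact h.of_eq fun a b => by
    by_cases hab : a = b
    · simp [hab]
    · simp only [hab, decide_false]
      rcases h2 : a.beq b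
      · rfl
      · exact absurd (Nat.eq_of_beq_eq_true h2) hab

lemma primrec_ble : Primrec₂ Nat.ble := by
  have h : Primrec₂ fun a b : ℕ => decide (a ≤ b) := by convert Primrec.nat_le.decide
  exact h.of_eq fun a b => by
    by_cases hab : a ≤ b
    · simp [hab, Nat.ble_eq]
    · simp only [hab, decide_false]
      rcases h2 : a.ble b
      · rfl
      · exact absurd (Nat.ble_eq.mp h2) hab

lemma beq_eq_decide (a b : ℕ) [inst : Decidable (a = b)] : a.beq b = decide (a = b) := by
  by_cases hab : a = b
  · simp [hab]
  · simp only [hab, decide_false]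
    rcases h2 : a.beq b
    · rfl
    · exact absurd (Nat.eq_of_beq_eq_true h2) hab

/-! ### The remap functional -/

/-- The output of reading single oracle bits according to `h`. -/
def remapOut (h : ℕ → Bool ⊕ (ℕ × Bool)) (p : Cantor) : Cantor :=
  fun m => Sum.elim id (fun kf => xor (p kf.1) kf.2) (h m)

/-- The Turing functional computing `remapOut h`. -/
def remapTF (h : ℕ → Bool ⊕ (ℕ × Bool)) (hc : Computable h) : TuringFunctional where
  approx := fun σ m =>
    Sum.elim (fun c => some c) (fun kf => (σ[kf.1]?).map (fun b => xor b kf.2)) (h m)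
  computable := by
    have h1 : Computable fun x : List Bool × ℕ => h x.2 := hc.comp Computable.snd
    apply Computable.sumCasesOn h1
    · exact (Computable.option_some.comp Computable.snd).to₂
    · apply Computable.option_map
      · exact Computable.list_getElem?.comp (Computable.fst.comp Computable.fst)
          (Computable.fst.comp Computable.snd)
      · have hxor : Computable₂ xor := (Primrec.dom_bool₂ _).to_comp
        exact Computable₂.comp hxor Computable.snd
          ((Computable.snd.comp Computable.snd).comp Computable.fst)
  mono := by
    intro σ τ n b hpre hb
    rcases hh : h n with c | kf <;> simp only [hh] at hb ⊢
    · exact hb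
    · simp only [Sum.elim_inr, Option.map_eq_some_iff] at hb ⊢
      obtain ⟨a, ha, rfl⟩ := hb
      exact ⟨a, get?_prefix hpre ha, rfl⟩

lemma remapTF_eval (h : ℕ → Bool ⊕ (ℕ × Bool)) (hc : Computable h) (p : Cantor) :
    (remapTF h hc).eval p = Part.some (remapOut h p) := by
  apply TuringFunctional.eval_eq_some
  · intro n
    rcases hh : h n with c | kf
    · exact ⟨0, c, by simp [remapTF, hh]⟩
    · refine ⟨kf.1 + 1, xor (p kf.1) kf.2, ?_⟩
      simp only [remapTF, hh, Sum.elim_inr, initSeg_get? p (Nat.lt_succ_self kf.1),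
        Option.map_some]
  · intro n s b hb
    rcases hh : h n with c | kf <;>
      simp only [remapTF, hh, Sum.elim_inl, Sum.elim_inr, Option.some_inj,
        Option.map_eq_some_iff] at hb
    · rw [← hb]; simp [remapOut, hh]
    · obtain ⟨a, ha, rfl⟩ := hb
      have hlt : kf.1 < s := by
        by_contra hk
        rw [List.getElem?_eq_none (by simpa using le_of_not_gt hk)] at ha
        cases ha
      rw [initSeg_get? p hlt] at ha
      rw [← Option.some_inj.mp ha]
      simp [remapOut, hh]

/-- Turing reducibility via remap. -/
lemma turingLe_remap (h : ℕ → Bool ⊕ (ℕ × Bool)) (hc : Computable h) (p : Cantor) :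
    TuringLe (remapOut h p) p :=
  ⟨remapTF h hc, remapTF_eval h hc p⟩

lemma turingLe_refl (p : Cantor) : TuringLe p p := by
  have h := turingLe_remap (fun m => Sum.inr (m, false))
    (Computable.sumInr.comp (Computable.id.pair (Computable.const false))) p
  have e : remapOut (fun m => Sum.inr (m, false)) p = p := by
    funext m; simp [remapOut]
  rwa [e] at h

/-! ### Pairing functional -/

def pairTF (Φ₁ Φ₂ : TuringFunctional) : TuringFunctional where
  approx := fun σ m => cond ((m % 2).beq 0) (Φ₁.approx σ (m / 2)) (Φ₂.approx σ (m / 2))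
  computable := by
    have hm2 : Computable fun x : List Bool × ℕ => (x.2 % 2).beq 0 :=
      primrec_beq.to_comp.comp (Primrec.nat_mod.comp Primrec.snd
        (Primrec.const 2)).to_comp (Computable.const 0)
    have hd2 : Computable fun x : List Bool × ℕ => x.2 / 2 :=
      (Primrec.nat_div.comp Primrec.snd (Primrec.const 2)).to_comp
    exact Computable.cond hm2 (Φ₁.computable.comp Computable.fst hd2)
      (Φ₂.computable.comp Computable.fst hd2)
  mono := by
    intro σ τ n b hpre hb
    cases hc : (n % 2).beq 0 <;> simp only [hc, cond_false, cond_true] at hb ⊢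
    · exact Φ₂.mono _ _ _ _ hpre hb
    · exact Φ₁.mono _ _ _ _ hpre hb

lemma pairTF_eval {Φ₁ Φ₂ : TuringFunctional} {p z₁ z₂ : Cantor}
    (h₁ : Φ₁.eval p = Part.some z₁) (h₂ : Φ₂.eval p = Part.some z₂) :
    (pairTF Φ₁ Φ₂).eval p = Part.some (pairC z₁ z₂) := by
  obtain ⟨ht₁, hu₁⟩ := TuringFunctional.eval_spec h₁
  obtain ⟨ht₂, hu₂⟩ := TuringFunctional.eval_spec h₂
  apply TuringFunctional.eval_eq_some
  · intro m
    rcases hc : (m % 2).beq 0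
    · obtain ⟨s, b, hb⟩ := ht₂ (m / 2)
      exact ⟨s, b, by simp [pairTF, hc, hb]⟩
    · obtain ⟨s, b, hb⟩ := ht₁ (m / 2)
      exact ⟨s, b, by simp [pairTF, hc, hb]⟩
  · intro m s b hb
    rw [pairTF] at hb; dsimp only at hb
    cases hc : (m % 2).beq 0 <;> simp only [hc, cond_false, cond_true] at hb
    · have hm : ¬ (m % 2 = 0) := by
        intro h'; rw [beq_eq_decide] at hc; simp [h'] at hc
      rw [hu₂ _ _ _ hb, pairC, if_neg hm]
    · have hm : m % 2 = 0 := by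
        rw [beq_eq_decide] at hc; simpa using hc
      rw [hu₁ _ _ _ hb, pairC, if_pos hm]
/-! ### Composition of Turing functionals -/

/-- The longest converged prefix of `Ψ`'s output on oracle prefix `σ`, scanning `k` steps. -/
def rhoAux (Ψ : TuringFunctional) (σ : List Bool) (k : ℕ) : List Bool :=
  Nat.rec [] (fun j acc =>
    cond (acc.length.beq j) (Option.casesOn (Ψ.approx σ j) acc (fun b => acc ++ [b])) acc) k

lemma rhoAux_zero (Ψ : TuringFunctional) (σ : List Bool) : rhoAux Ψ σ 0 = [] := rfl

lemma rhoAux_succ (Ψ : TuringFunctional) (σ : List Bool) (j : ℕ) :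
    rhoAux Ψ σ (j + 1) =
      cond ((rhoAux Ψ σ j).length.beq j)
        (Option.casesOn (Ψ.approx σ j) (rhoAux Ψ σ j) (fun b => rhoAux Ψ σ j ++ [b]))
        (rhoAux Ψ σ j) := rfl

lemma rhoAux_length_le (Ψ : TuringFunctional) (σ : List Bool) (k : ℕ) :
    (rhoAux Ψ σ k).length ≤ k := by
  induction k with
  | zero => simp [rhoAux_zero]
  | succ j ih =>
      rw [rhoAux_succ]
      cases hb : (rhoAux Ψ σ j).length.beq j
      · simpa using Nat.le_succ_of_le ih
      · cases ha : Ψ.approx σ j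
        · simpa using Nat.le_succ_of_le ih
        · simp only [cond_true, List.length_append, List.length_cons, List.length_nil]
          omega

lemma rhoAux_prefix_succ (Ψ : TuringFunctional) (σ : List Bool) (j : ℕ) :
    rhoAux Ψ σ j <+: rhoAux Ψ σ (j + 1) := by
  rw [rhoAux_succ]
  cases (rhoAux Ψ σ j).length.beq j
  · simp
  · cases Ψ.approx σ j
    · simp
    · simpa using List.prefix_append _ _

lemma rhoAux_prefix_mono (Ψ : TuringFunctional) (σ : List Bool) {k k' : ℕ} (h : k ≤ k') :
    rhoAux Ψ σ k <+: rhoAux Ψ σ k' := by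
  induction k' with
  | zero => rw [Nat.le_zero.mp h]
  | succ j ih =>
      rcases Nat.lt_or_ge k (j + 1) with h' | h'
      · exact (ih (Nat.lt_succ_iff.mp h')).trans (rhoAux_prefix_succ Ψ σ j)
      · rw [Nat.le_antisymm h h']

lemma rhoAux_mono_oracle (Ψ : TuringFunctional) {σ τ : List Bool} (hpre : σ <+: τ) (k : ℕ) :
    rhoAux Ψ σ k <+: rhoAux Ψ τ k := by
  induction k with
  | zero => simp [rhoAux_zero]
  | succ j ih =>
      cases hb : (rhoAux Ψ σ j).length.beq j
      · rw [rhoAux_succ Ψ σ]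
        rw [hb, cond_false]
        exact ih.trans (rhoAux_prefix_succ Ψ τ j)
      · have hlen : (rhoAux Ψ σ j).length = j := Nat.eq_of_beq_eq_true hb
        have heq : rhoAux Ψ σ j = rhoAux Ψ τ j :=
          ih.eq_of_length (Nat.le_antisymm ih.length_le
            ((rhoAux_length_le Ψ τ j).trans hlen.ge))
        cases ha : Ψ.approx σ j
        · rw [rhoAux_succ Ψ σ, hb, cond_true, ha]
          exact ih.trans (rhoAux_prefix_succ Ψ τ j)
        · rename_i b
          have ha' : Ψ.approx τ j = some b := Ψ.mono _ _ _ _ hpre ha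
          rw [rhoAux_succ Ψ σ, rhoAux_succ Ψ τ, ← heq, hb, cond_true, cond_true, ha, ha']
lemma rhoAux_initSeg {Ψ : TuringFunctional} {p r : Cantor}
    (H : ∀ j t b, Ψ.approx (initSeg p t) j = some b → b = r j) (t k : ℕ) :
    rhoAux Ψ (initSeg p t) k = initSeg r (rhoAux Ψ (initSeg p t) k).length := by
  induction k with
  | zero => rw [rhoAux_zero]; rfl
  | succ j ih =>
      rw [rhoAux_succ]
      cases hb : (rhoAux Ψ (initSeg p t) j).length.beq j
      · rw [cond_false]; exact ih
      · have hlen : (rhoAux Ψ (initSeg p t) j).length = j := Nat.eq_of_beq_eq_true hb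
        cases ha : Ψ.approx (initSeg p t) j
        · rw [cond_true]; exact ih
        · rename_i b
          have e1 : rhoAux Ψ (initSeg p t) j ++ [b] = initSeg r j ++ [r j] := by
            rw [H j t b ha, ih, hlen]
          rw [cond_true]
          show rhoAux Ψ (initSeg p t) j ++ [b]
            = initSeg r (rhoAux Ψ (initSeg p t) j ++ [b]).length
          rw [e1]
          have e2 : (initSeg r j ++ [r j]).length = j + 1 := by simp
          rw [e2, initSeg_succ]

lemma rhoAux_reach {Ψ : TuringFunctional} {p : Cantor}
    (htot : ∀ j, ∃ t b, Ψ.approx (initSeg p t) j = some b) (m : ℕ) :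
    ∃ t, m ≤ (rhoAux Ψ (initSeg p t) t).length := by
  -- first find a single stage where all j < m converge
  have key : ∃ t, m ≤ t ∧ ∀ j, j < m → ∃ b, Ψ.approx (initSeg p t) j = some b := by
    induction m with
    | zero => exact ⟨0, le_refl 0, fun j hj => absurd hj (Nat.not_lt_zero j)⟩
    | succ n ih =>
        obtain ⟨t, htn, ht⟩ := ih
        obtain ⟨t', b', hb'⟩ := htot n
        refine ⟨max (t + 1) t', ?_, fun j hj => ?_⟩
        · omega
        · rcases Nat.lt_or_ge j n with hj' | hj'
          · obtain ⟨b, hb⟩ := ht j hj'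
            exact ⟨b, Ψ.mono _ _ _ _ (initSeg_prefix p (by omega)) hb⟩
          · have : j = n := by omega
            subst this
            exact ⟨b', Ψ.mono _ _ _ _ (initSeg_prefix p (le_max_right _ _)) hb'⟩
  obtain ⟨t, htm, ht⟩ := key
  refine ⟨t, ?_⟩
  have step : ∀ k, k ≤ m → (rhoAux Ψ (initSeg p t) k).length = k := by
    intro k
    induction k with
    | zero => intro _; rw [rhoAux_zero]; rfl
    | succ j ih =>
        intro hk
        have hj := ih (by omega)
        obtain ⟨b, hb⟩ := ht j (by omega)
        rw [rhoAux_succ, hj, Nat.beq_refl, cond_true, hb]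
        simp [hj]
  have h1 := step m (le_refl m)
  calc m = (rhoAux Ψ (initSeg p t) m).length := h1.symm
    _ ≤ (rhoAux Ψ (initSeg p t) t).length :=
        (rhoAux_prefix_mono Ψ _ htm).length_le
/-- Composition of Turing functionals. -/
def compTF (Φ Ψ : TuringFunctional) : TuringFunctional where
  approx := fun σ n => Φ.approx (rhoAux Ψ σ σ.length) n
  computable := by
    have hrho : Computable fun σ : List Bool => rhoAux Ψ σ σ.length := by
      have hstep : Computable₂ fun (σ : List Bool) (ja : ℕ × List Bool) =>
          cond (ja.2.length.beq ja.1)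
            (Option.casesOn (motive := fun _ => List Bool) (Ψ.approx σ ja.1) ja.2 (fun b => ja.2 ++ [b])) ja.2 := by
        have hc : Computable fun x : List Bool × ℕ × List Bool => x.2.2.length.beq x.2.1 :=
          primrec_beq.to_comp.comp
            (Computable.list_length.comp (Computable.snd.comp Computable.snd))
            (Computable.fst.comp Computable.snd)
        have hopt : Computable fun x : List Bool × ℕ × List Bool =>
            Option.casesOn (motive := fun _ => List Bool) (Ψ.approx x.1 x.2.1) x.2.2 (fun b => x.2.2 ++ [b]) := by
          apply Computable.option_casesOn
            (Ψ.computable.comp Computable.fst (Computable.fst.comp Computable.snd))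
            (Computable.snd.comp Computable.snd)
          exact (Computable.list_concat.comp
            ((Computable.snd.comp Computable.snd).comp Computable.fst)
            Computable.snd).to₂
        exact Computable.cond hc hopt (Computable.snd.comp Computable.snd)
      have h0 := Computable.nat_rec (f := fun σ : List Bool => σ.length)
        (g := fun _ : List Bool => ([] : List Bool)) Computable.list_length
        (Computable.const []) hstep
      exact h0.of_eq fun σ => rfl
    exact Φ.computable.comp (hrho.comp Computable.fst) Computable.snd
  mono := by
    intro σ τ n b hpre hb
    refine Φ.mono _ _ _ _ ?_ hb
    exact (rhoAux_mono_oracle Ψ hpre σ.length).trans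
      (rhoAux_prefix_mono Ψ τ hpre.length_le)

lemma compTF_eval {Φ Ψ : TuringFunctional} {p r z : Cantor}
    (hΨ : Ψ.eval p = Part.some r) (hΦ : Φ.eval r = Part.some z) :
    (compTF Φ Ψ).eval p = Part.some z := by
  obtain ⟨htΨ, huΨ⟩ := TuringFunctional.eval_spec hΨ
  obtain ⟨htΦ, huΦ⟩ := TuringFunctional.eval_spec hΦ
  have hform : ∀ t, rhoAux Ψ (initSeg p t) t
      = initSeg r (rhoAux Ψ (initSeg p t) t).length := fun t => rhoAux_initSeg huΨ t t
  apply TuringFunctional.eval_eq_some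
  · intro n
    obtain ⟨s, b, hb⟩ := htΦ n
    obtain ⟨t, ht⟩ := rhoAux_reach htΨ s
    refine ⟨t, b, ?_⟩
    show Φ.approx (rhoAux Ψ (initSeg p t) (initSeg p t).length) n = some b
    rw [initSeg_length, hform t]
    exact Φ.mono _ _ _ _ (initSeg_prefix r ht) hb
  · intro n t b hb
    have hb0 : Φ.approx (rhoAux Ψ (initSeg p t) t) n = some b := by
      have e : (compTF Φ Ψ).approx (initSeg p t) n
          = Φ.approx (rhoAux Ψ (initSeg p t) (initSeg p t).length) n := rfl
      rw [e, initSeg_length] at hb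
      exact hb
    rw [hform t] at hb0
    exact huΦ _ _ _ hb0

lemma turingLe_trans {z r p : Cantor} (h1 : TuringLe z r) (h2 : TuringLe r p) :
    TuringLe z p := by
  obtain ⟨Φ, hΦ⟩ := h1
  obtain ⟨Ψ, hΨ⟩ := h2
  exact ⟨compTF Φ Ψ, compTF_eval hΨ hΦ⟩
/-! ### The evaluation-map functional -/

/-- The `off`-side of an interleaved oracle. -/
def sideC (off : ℕ) (q : Cantor) : Cantor := fun j => q (2 * j + off)

lemma sideC_zero (q : Cantor) : sideC 0 q = leftC q := by
  funext j; simp [sideC, leftC]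

lemma sideC_one (q : Cantor) : sideC 1 q = rightC q := by
  funext j; simp [sideC, rightC]

/-- The single-step test used to search for a value of a monotone approximation. -/
def testS (off n : ℕ) (σ : List Bool) (k : ℕ) : Option Bool :=
  cond ((k % 2).beq off && (k / 2).unpair.1.beq n &&
      Nat.ble (k / 2).unpair.2.unpair.2 1 && σ.getD k false)
    (some ((k / 2).unpair.2.unpair.2.beq 1)) none

/-- First hit of `testS` below `k`. -/
def searchB (off n : ℕ) (σ : List Bool) (k : ℕ) : Option Bool :=
  Nat.rec none (fun j acc =>
    Option.casesOn (motive := fun _ => Option Bool) acc (testS off n σ j) (fun b => some b)) k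

lemma searchB_succ (off n : ℕ) (σ : List Bool) (j : ℕ) :
    searchB off n σ (j + 1) = Option.casesOn (motive := fun _ => Option Bool)
      (searchB off n σ j) (testS off n σ j) (fun b => some b) := rfl

lemma searchB_mono_k {off n : ℕ} {σ : List Bool} {k k' : ℕ} {b : Bool}
    (hk : k ≤ k') (hb : searchB off n σ k = some b) : searchB off n σ k' = some b := by
  induction k' with
  | zero => rwa [Nat.le_zero.mp hk] at hb
  | succ j ih =>
      rcases Nat.lt_or_ge k (j + 1) with h' | h'
      · have := ih (Nat.lt_succ_iff.mp h')
        rw [searchB_succ, this]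
      · rwa [Nat.le_antisymm hk h'] at hb

lemma searchB_congr {off n : ℕ} {σ τ : List Bool} {k : ℕ}
    (h : ∀ j, j < k → testS off n σ j = testS off n τ j) :
    searchB off n σ k = searchB off n τ k := by
  induction k with
  | zero => rfl
  | succ j ih =>
      rw [searchB_succ, searchB_succ, ih (fun j' hj' => h j' (by omega)), h j (by omega)]

lemma searchB_exists_test {off n : ℕ} {σ : List Bool} {k : ℕ} {b : Bool}
    (hb : searchB off n σ k = some b) : ∃ j, j < k ∧ testS off n σ j = some b := by
  induction k with
  | zero => simp [searchB] at hb
  | succ j ih =>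
      rw [searchB_succ] at hb
      cases hs : searchB off n σ j
      · rw [hs] at hb
        exact ⟨j, Nat.lt_succ_self j, hb⟩
      · rename_i val
        rw [hs] at hb
        have hvb : val = b := Option.some_inj.mp hb
        obtain ⟨j', hj', ht⟩ := ih (hvb ▸ hs)
        exact ⟨j', by omega, ht⟩

lemma searchB_isSome {off n : ℕ} {σ : List Bool} {j k : ℕ} {b : Bool}
    (ht : testS off n σ j = some b) (hjk : j < k) :
    ∃ b', searchB off n σ k = some b' := by
  induction k with
  | zero => omega
  | succ j' ih =>
      rcases Nat.lt_or_ge j j' with h' | h'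
      · obtain ⟨b', hb'⟩ := ih h'
        exact ⟨b', by rw [searchB_succ, hb']⟩
      · have : j = j' := by omega
        subst this
        cases hs : searchB off n σ j
        · exact ⟨b, by rw [searchB_succ, hs, ht]⟩
        · rename_i b''
          exact ⟨b'', by rw [searchB_succ, hs]⟩

lemma testS_some_lt {off n : ℕ} {σ : List Bool} {k : ℕ} {b : Bool}
    (ht : testS off n σ k = some b) : k < σ.length := by
  by_contra hk
  have : σ.getD k false = false := List.getD_eq_default _ _ (le_of_not_gt hk)
  rw [testS, this, Bool.and_false, cond_false] at ht
  cases ht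

lemma testS_congr_prefix {off n : ℕ} {σ τ : List Bool} {k : ℕ}
    (hpre : σ <+: τ) (hk : k < σ.length) : testS off n σ k = testS off n τ k := by
  have h1 : σ.getD k false = τ.getD k false := by
    rw [List.getD_eq_getElem?_getD, List.getD_eq_getElem?_getD, get?_prefix_lt hpre hk]
  rw [testS, testS, h1]

/-- A Turing functional evaluating the `off`-side of the oracle as a monotone
approximation. -/
def searchTF (off : ℕ) : TuringFunctional where
  approx := fun σ n => searchB off n σ σ.length
  computable := by
    have hbool : Computable₂ (· && · : Bool → Bool → Bool) := (Primrec.dom_bool₂ _).to_comp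
    have hk : Computable fun x : (List Bool × ℕ) × ℕ × Option Bool => x.2.1 :=
      Computable.fst.comp Computable.snd
    have hσ : Computable fun x : (List Bool × ℕ) × ℕ × Option Bool => x.1.1 :=
      Computable.fst.comp Computable.fst
    have hn : Computable fun x : (List Bool × ℕ) × ℕ × Option Bool => x.1.2 :=
      Computable.snd.comp Computable.fst
    have hi : Computable fun x : (List Bool × ℕ) × ℕ × Option Bool =>
        (x.2.1 / 2).unpair.2.unpair.2 := by
      have h2 : Computable fun x : (List Bool × ℕ) × ℕ × Option Bool => x.2.1 / 2 :=
        Primrec.nat_div.to_comp.comp hk (Computable.const 2)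
      exact Computable.snd.comp (Primrec.unpair.to_comp.comp
        (Computable.snd.comp (Primrec.unpair.to_comp.comp h2)))
    have hcond : Computable fun x : (List Bool × ℕ) × ℕ × Option Bool =>
        ((x.2.1 % 2).beq off && (x.2.1 / 2).unpair.1.beq x.1.2 &&
          Nat.ble (x.2.1 / 2).unpair.2.unpair.2 1 && x.1.1.getD x.2.1 false) := by
      have c1 : Computable fun x : (List Bool × ℕ) × ℕ × Option Bool => (x.2.1 % 2).beq off :=
        primrec_beq.to_comp.comp
          (Primrec.nat_mod.to_comp.comp hk (Computable.const 2)) (Computable.const off)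
      have c2 : Computable fun x : (List Bool × ℕ) × ℕ × Option Bool =>
          (x.2.1 / 2).unpair.1.beq x.1.2 :=
        primrec_beq.to_comp.comp (Computable.fst.comp (Primrec.unpair.to_comp.comp
          (Primrec.nat_div.to_comp.comp hk (Computable.const 2)))) hn
      have c3 : Computable fun x : (List Bool × ℕ) × ℕ × Option Bool =>
          Nat.ble (x.2.1 / 2).unpair.2.unpair.2 1 :=
        primrec_ble.to_comp.comp hi (Computable.const 1)
      have c4 : Computable fun x : (List Bool × ℕ) × ℕ × Option Bool =>
          x.1.1.getD x.2.1 false :=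
        Computable.option_getD (Computable.list_getElem?.comp hσ hk) (Computable.const false)
      exact hbool.comp (hbool.comp (hbool.comp c1 c2) c3) c4
    have htest : Computable fun x : (List Bool × ℕ) × ℕ × Option Bool =>
        testS off x.1.2 x.1.1 x.2.1 := by
      apply Computable.cond hcond
      · exact Computable.option_some.comp (primrec_beq.to_comp.comp hi (Computable.const 1))
      · exact Computable.const none
    have hstep : Computable₂ fun (x : List Bool × ℕ) (ja : ℕ × Option Bool) =>
        Option.casesOn (motive := fun _ => Option Bool) ja.2
          (testS off x.2 x.1 ja.1) (fun b => some b) := by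
      apply Computable.option_casesOn (Computable.snd.comp Computable.snd) htest
      exact (Computable.option_some.comp Computable.snd).to₂
    have h0 := Computable.nat_rec (f := fun x : List Bool × ℕ => x.1.length)
      (g := fun _ : List Bool × ℕ => (none : Option Bool))
      (Computable.list_length.comp Computable.fst) (Computable.const none) hstep
    exact h0.of_eq fun x => rfl
  mono := by
    intro σ τ n b hpre hb
    have h1 : searchB off n τ σ.length = some b := by
      rw [← searchB_congr (fun j hj => testS_congr_prefix hpre hj)]
      exact hb
    exact searchB_mono_k hpre.length_le h1

lemma testS_spec {off n t k : ℕ} {b : Bool} {q : Cantor} (hoff : off < 2)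
    (ht : testS off n (initSeg q t) k = some b) :
    ∃ s i, i < 2 ∧ k = 2 * tpl n s i + off ∧ q k = true ∧ b = i.beq 1 := by
  have hklt : k < t := by
    have := testS_some_lt ht
    rwa [initSeg_length] at this
  rw [testS] at ht
  cases hc : ((k % 2).beq off && (k / 2).unpair.1.beq n &&
      Nat.ble (k / 2).unpair.2.unpair.2 1 && (initSeg q t).getD k false)
  · rw [hc, cond_false] at ht; cases ht
  · rw [hc, cond_true] at ht
    simp only [Bool.and_eq_true] at hc
    obtain ⟨⟨⟨h1, h2⟩, h3⟩, h4⟩ := hc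
    refine ⟨(k / 2).unpair.2.unpair.1, (k / 2).unpair.2.unpair.2, ?_, ?_, ?_, ?_⟩
    · have := Nat.ble_eq.mp h3; omega
    · have e1 : k % 2 = off := Nat.eq_of_beq_eq_true h1
      have e2 : (k / 2).unpair.1 = n := Nat.eq_of_beq_eq_true h2
      have e3 : tpl n (k / 2).unpair.2.unpair.1 (k / 2).unpair.2.unpair.2 = k / 2 := by
        rw [tpl, ← e2, Nat.pair_unpair, Nat.pair_unpair]
      omega
    · rw [initSeg_getD q hklt] at h4; exact h4
    · exact (Option.some_inj.mp ht).symm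

lemma testS_hit {off n s i : ℕ} {q : Cantor} (hoff : off < 2) (hi : i < 2)
    (hq : sideC off q (tpl n s i) = true) :
    testS off n (initSeg q (2 * tpl n s i + off + 1)) (2 * tpl n s i + off)
      = some (i.beq 1) := by
  set k := 2 * tpl n s i + off with hk
  have e1 : k % 2 = off := by omega
  have e2 : k / 2 = tpl n s i := by omega
  have e3 : (k / 2).unpair.1 = n := by rw [e2, tpl, Nat.unpair_pair]
  have e4 : (k / 2).unpair.2.unpair.2 = i := by rw [e2, tpl, Nat.unpair_pair, Nat.unpair_pair]
  have e5 : (initSeg q (k + 1)).getD k false = q k := initSeg_getD q (Nat.lt_succ_self k)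
  have e6 : q k = true := hq
  rw [testS, e1, e3, e4, e5, e6, Nat.beq_refl, Nat.ble_eq.mpr (by omega : i ≤ 1)]
  simp

lemma searchTF_eval {off : ℕ} (hoff : off < 2) {q : Cantor}
    (h : TotalMonotoneApprox (sideC off q)) :
    (searchTF off).eval q = Part.some (eVal (sideC off q)) := by
  apply TuringFunctional.eval_eq_some
  · intro n
    obtain ⟨s, i, hi, htrue⟩ := h.2 n
    have hht := testS_hit hoff hi htrue
    obtain ⟨b', hb'⟩ := searchB_isSome (k := 2 * tpl n s i + off + 1) hht (Nat.lt_succ_self _)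
    refine ⟨2 * tpl n s i + off + 1, b', ?_⟩
    show searchB off n (initSeg q (2 * tpl n s i + off + 1))
      (initSeg q (2 * tpl n s i + off + 1)).length = some b'
    rwa [initSeg_length]
  · intro n t b hb
    have hb' : searchB off n (initSeg q t) t = some b := by
      have e : (searchTF off).approx (initSeg q t) n
          = searchB off n (initSeg q t) (initSeg q t).length := rfl
      rwa [e, initSeg_length] at hb
    obtain ⟨j, hj, ht⟩ := searchB_exists_test hb'
    obtain ⟨s, i, hi, hkeq, hqt, hbeq⟩ := testS_spec hoff ht
    have hside : sideC off q (tpl n s i) = true := by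
      rw [sideC]; rw [hkeq] at hqt; exact hqt
    subst hbeq
    interval_cases i
    · have hne : ¬ ∃ s', sideC off q (tpl n s' 1) = true := by
        rintro ⟨s', hs'⟩
        have := (h.1.2.1 n s s' 0 1 hside hs').2
        omega
      have he : eVal (sideC off q) n = false := by simp [eVal, hne]
      rw [he]; rfl
    · have hex : ∃ s', sideC off q (tpl n s' 1) = true := ⟨s, hside⟩
      have he : eVal (sideC off q) n = true := by simp [eVal, hex]
      rw [he]; rfl
/-! ### A catalogue of Turing reductions -/

lemma turingLe_natSet (lbl : ℕ) (p : Cantor) : TuringLe (natSet lbl) p := by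
  have hc : Computable fun m : ℕ => (Sum.inl (m.beq lbl) : Bool ⊕ ℕ × Bool) :=
    Computable.sumInl.comp (primrec_beq.to_comp.comp Computable.id (Computable.const lbl))
  have h := turingLe_remap _ hc p
  have e : remapOut (fun m => (Sum.inl (m.beq lbl) : Bool ⊕ ℕ × Bool)) p = natSet lbl := by
    funext m
    simp only [remapOut, Sum.elim_inl, id, natSet]
    rw [beq_eq_decide]
  rwa [e] at h

lemma turingLe_zeroSeq (p : Cantor) : TuringLe zeroSeq p := by
  have h := turingLe_remap (fun _ => (Sum.inl false : Bool ⊕ ℕ × Bool)) (Computable.const _) p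
  have e : remapOut (fun _ => (Sum.inl false : Bool ⊕ ℕ × Bool)) p = zeroSeq := by
    funext m; rfl
  rwa [e] at h

lemma turingLe_leftC (p : Cantor) : TuringLe (leftC p) p := by
  have hc : Computable fun m : ℕ => (Sum.inr (2 * m, false) : Bool ⊕ ℕ × Bool) :=
    Computable.sumInr.comp (Computable.pair Primrec.nat_double.to_comp
      (Computable.const false))
  have h := turingLe_remap _ hc p
  have e : remapOut (fun m => (Sum.inr (2 * m, false) : Bool ⊕ ℕ × Bool)) p = leftC p := by
    funext m; simp [remapOut, leftC]
  rwa [e] at h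

lemma turingLe_rightC (p : Cantor) : TuringLe (rightC p) p := by
  have hc : Computable fun m : ℕ => (Sum.inr (2 * m + 1, false) : Bool ⊕ ℕ × Bool) :=
    Computable.sumInr.comp (Computable.pair Primrec.nat_double_succ.to_comp
      (Computable.const false))
  have h := turingLe_remap _ hc p
  have e : remapOut (fun m => (Sum.inr (2 * m + 1, false) : Bool ⊕ ℕ × Bool)) p
      = rightC p := by
    funext m; simp [remapOut, rightC]
  rwa [e] at h

lemma turingLe_pairC {a b p : Cantor} (ha : TuringLe a p) (hb : TuringLe b p) :
    TuringLe (pairC a b) p := by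
  obtain ⟨Φ₁, h₁⟩ := ha
  obtain ⟨Φ₂, h₂⟩ := hb
  exact ⟨pairTF Φ₁ Φ₂, pairTF_eval h₁ h₂⟩

lemma turingLe_inC (lbl : ℕ) {z p : Cantor} (h : TuringLe z p) : TuringLe (inC lbl z) p :=
  turingLe_pairC (turingLe_natSet lbl p) h

/-- The remap computing `maEncode`. -/
def hME : ℕ → Bool ⊕ ℕ × Bool := fun k =>
  cond (k.unpair.1.beq k.unpair.2.unpair.1)
    (cond (k.unpair.2.unpair.2.beq 1) (Sum.inr (k.unpair.1, false))
      (cond (k.unpair.2.unpair.2.beq 0) (Sum.inr (k.unpair.1, true)) (Sum.inl false)))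
    (Sum.inl false)

lemma maEncode_eq_decide (r : Cantor) (n s i : ℕ) :
    maEncode r (tpl n s i) = decide (n = s ∧ (r n).toNat = i) := by
  by_cases hc1 : n = s ∧ (r n).toNat = i
  · obtain ⟨h1, h2⟩ := hc1
    subst h1
    have hex : ∃ m, tpl n n i = tpl m m (r m).toNat := ⟨n, by rw [h2]⟩
    simp [maEncode, hex, h2]
  · have hne : ¬ ∃ m, tpl n s i = tpl m m (r m).toNat := by
      rintro ⟨m, hm⟩
      obtain ⟨e1, e2, e3⟩ := tpl_inj hm
      exact hc1 ⟨by omega, by rw [e1, e3]⟩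
    simp [maEncode, hne, hc1]

lemma turingLe_maEncode_self (r : Cantor) : TuringLe (maEncode r) r := by
  have hc : Computable hME := by
    have h1 : Computable fun k : ℕ => k.unpair.1 :=
      Computable.fst.comp Primrec.unpair.to_comp
    have h2 : Computable fun k : ℕ => k.unpair.2.unpair.1 :=
      Computable.fst.comp (Primrec.unpair.to_comp.comp
        (Computable.snd.comp Primrec.unpair.to_comp))
    have h3 : Computable fun k : ℕ => k.unpair.2.unpair.2 :=
      Computable.snd.comp (Primrec.unpair.to_comp.comp
        (Computable.snd.comp Primrec.unpair.to_comp))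
    apply Computable.cond (primrec_beq.to_comp.comp h1 h2)
    · apply Computable.cond (primrec_beq.to_comp.comp h3 (Computable.const 1))
      · exact Computable.sumInr.comp (Computable.pair h1 (Computable.const false))
      · apply Computable.cond (primrec_beq.to_comp.comp h3 (Computable.const 0))
        · exact Computable.sumInr.comp (Computable.pair h1 (Computable.const true))
        · exact Computable.const _
    · exact Computable.const _
  have h := turingLe_remap hME hc r
  have e : remapOut hME r = maEncode r := by
    funext k
    obtain ⟨n, s, i, rfl⟩ : ∃ n s i, k = tpl n s i :=
      ⟨k.unpair.1, k.unpair.2.unpair.1, k.unpair.2.unpair.2,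
        by rw [tpl, Nat.pair_unpair, Nat.pair_unpair]⟩
    rw [maEncode_eq_decide, remapOut, hME]
    simp only [tpl, Nat.unpair_pair]
    by_cases h1 : n = s
    · subst h1
      rw [Nat.beq_refl, cond_true]
      by_cases h2 : i = 1
      · subst h2
        rw [Nat.beq_refl, cond_true]
        cases hr : r n <;> simp [hr]
      · rw [show i.beq 1 = false by rw [beq_eq_decide]; simp [h2], cond_false]
        by_cases h3 : i = 0
        · subst h3
          rw [Nat.beq_refl, cond_true]
          cases hr : r n <;> simp [hr]
        · rw [show i.beq 0 = false by rw [beq_eq_decide]; simp [h3], cond_false]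
          have hni : ¬ ((r n).toNat = i) := by
            cases hr : r n <;> simp <;> omega
          simp [hni]
    · rw [show n.beq s = false by rw [beq_eq_decide]; simp [h1], cond_false]
      simp [h1]
  rwa [e] at h
lemma turingLe_maEncode {r p : Cantor} (h : TuringLe r p) : TuringLe (maEncode r) p :=
  turingLe_trans (turingLe_maEncode_self r) h

lemma turingLe_eval_leftC {q : Cantor} (h : TotalMonotoneApprox (leftC q)) :
    TuringLe (eVal (leftC q)) q := by
  refine ⟨searchTF 0, ?_⟩
  have h' : TotalMonotoneApprox (sideC 0 q) := by rw [sideC_zero]; exact h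
  rw [searchTF_eval (by omega) h', sideC_zero]

lemma turingLe_eval_rightC {q : Cantor} (h : TotalMonotoneApprox (rightC q)) :
    TuringLe (eVal (rightC q)) q := by
  refine ⟨searchTF 1, ?_⟩
  have h' : TotalMonotoneApprox (sideC 1 q) := by rw [sideC_one]; exact h
  rw [searchTF_eval (by omega) h', sideC_one]

/-! ### Represented-space membership lemmas -/

lemma natSet_zero_ne_one : natSet 0 ≠ natSet 1 := by
  intro h
  have := congrFun h 0
  simp [natSet] at this

@[simp] lemma leftC_inC (i : ℕ) (p : Cantor) : leftC (inC i p) = natSet i := leftC_pairC _ _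
@[simp] lemma rightC_inC (i : ℕ) (p : Cantor) : rightC (inC i p) = p := rightC_pairC _ _

namespace RepSp

lemma mem_sum_iff {A B : RepSp} {r : Cantor} {x : (A.sum B).X} :
    x ∈ (A.sum B).δ r ↔
      (leftC r = natSet 0 ∧ ∃ a ∈ A.δ (rightC r), x = Sum.inl a) ∨
      (leftC r ≠ natSet 0 ∧ leftC r = natSet 1 ∧ ∃ b ∈ B.δ (rightC r), x = Sum.inr b) := by
  show x ∈ (if leftC r = natSet 0 then (A.δ (rightC r)).map Sum.inl
    else if leftC r = natSet 1 then (B.δ (rightC r)).map Sum.inr else Part.none) ↔ _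
  by_cases h0 : leftC r = natSet 0
  · rw [if_pos h0]
    erw [Part.mem_map_iff]
    constructor
    · rintro ⟨a, ha, rfl⟩
      exact Or.inl ⟨h0, a, ha, rfl⟩
    · rintro (⟨-, a, ha, rfl⟩ | ⟨hne, -, -⟩)
      · exact ⟨a, ha, rfl⟩
      · exact absurd h0 hne
  · rw [if_neg h0]
    by_cases h1 : leftC r = natSet 1
    · rw [if_pos h1]
      erw [Part.mem_map_iff]
      constructor
      · rintro ⟨b, hb, rfl⟩
        exact Or.inr ⟨h0, h1, b, hb, rfl⟩
      · rintro (⟨h0', -⟩ | ⟨-, -, b, hb, rfl⟩)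
        · exact absurd h0' h0
        · exact ⟨b, hb, rfl⟩
    · rw [if_neg h1]
      erw [iff_false_left (Part.notMem_none _)]
      rintro (⟨h0', -⟩ | ⟨-, h1', -⟩)
      · exact h0 h0'
      · exact h1 h1'

lemma mem_sum_inl {A B : RepSp} {r : Cantor} {a : A.X} (h0 : leftC r = natSet 0)
    (ha : a ∈ A.δ (rightC r)) : (Sum.inl a : (A.sum B).X) ∈ (A.sum B).δ r :=
  mem_sum_iff.mpr (Or.inl ⟨h0, a, ha, rfl⟩)

lemma mem_sum_inr {A B : RepSp} {r : Cantor} {b : B.X} (h1 : leftC r = natSet 1)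
    (hb : b ∈ B.δ (rightC r)) : (Sum.inr b : (A.sum B).X) ∈ (A.sum B).δ r := by
  apply mem_sum_iff.mpr
  refine Or.inr ⟨?_, h1, b, hb, rfl⟩
  rw [h1]
  exact fun h => natSet_zero_ne_one h.symm

lemma mem_prod_iff {A B : RepSp} {r : Cantor} {x : (A.prod B).X} :
    x ∈ (A.prod B).δ r ↔
      ∃ a ∈ A.δ (leftC r), ∃ b ∈ B.δ (rightC r), x = (a, b) := by
  show x ∈ (A.δ (leftC r)).bind (fun a => (B.δ (rightC r)).map fun b => (a, b)) ↔ _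
  refine (Part.mem_bind_iff.trans (exists_congr fun a => and_congr_right fun _ => Part.mem_map_iff _)).trans ?_
  constructor
  · rintro ⟨a, ha, b, hb, rfl⟩
    exact ⟨a, ha, b, hb, rfl⟩
  · rintro ⟨a, ha, b, hb, rfl⟩
    exact ⟨a, ha, b, hb, rfl⟩

lemma mem_hat_iff {A : RepSp} {r : Cantor} {y : Option A.X} :
    y ∈ A.hat.δ r ↔ y = ((evalMA r).bind A.δ).toOption := by
  show y ∈ Part.some _ ↔ _
  exact Part.mem_some_iff

end RepSp

/-- The value of the `hat CantorSp` representation. -/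
lemma hatCantor_val (r : Cantor) :
    ((evalMA r).bind CantorSp.δ).toOption
      = if TotalMonotoneApprox r then some (eVal r) else none := by
  by_cases h : TotalMonotoneApprox r
  · rw [if_pos h]
    apply Part.toOption_eq_some_iff.mpr
    exact Part.mem_bind_iff.mpr ⟨eVal r, ⟨h, rfl⟩, Part.mem_some_iff.mpr rfl⟩
  · rw [if_neg h]
    apply Part.toOption_eq_none_iff.mpr
    rintro ⟨hd, -⟩
    exact h hd

/-! ### Part 1: `f ⊞ g ≡_sc f ⊔ g` on Cantor space -/

lemma mem_cantor_iff {r : Cantor} {x : Cantor} : x ∈ CantorSp.δ r ↔ x = r :=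
  Part.mem_some_iff

theorem boxplus_scEq_sqcup (F G : Cantor → Set Cantor) :
    scEq ((ofCantor F).boxplus (ofCantor G)) ((ofCantor F).sqcup (ofCantor G)) := by
  have hAδ : ∀ r x, (x ∈ ((ofCantor F).boxplus (ofCantor G)).A.δ r ↔
      (leftC r = natSet 0 ∧ x = Sum.inl (rightC r)) ∨
      (leftC r ≠ natSet 0 ∧ leftC r = natSet 1 ∧ x = Sum.inr (rightC r))) := by
    intro r x
    rw [show ((ofCantor F).boxplus (ofCantor G)).A.δ r
        = ((ofCantor F).A.sum (ofCantor G).A).δ r from rfl]; erw [RepSp.mem_sum_iff]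
    constructor
    · rintro (⟨h0, a, ha, rfl⟩ | ⟨hne, h1, b, hb, rfl⟩)
      · exact Or.inl ⟨h0, by rw [mem_cantor_iff.mp ha]; rfl⟩
      · exact Or.inr ⟨hne, h1, by rw [mem_cantor_iff.mp hb]; rfl⟩
    · rintro (⟨h0, rfl⟩ | ⟨hne, h1, rfl⟩)
      · exact Or.inl ⟨h0, _, mem_cantor_iff.mpr rfl, rfl⟩
      · exact Or.inr ⟨hne, h1, _, mem_cantor_iff.mpr rfl, rfl⟩
  have hAδ' : ∀ r x, (x ∈ ((ofCantor F).sqcup (ofCantor G)).A.δ r ↔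
      (leftC r = natSet 0 ∧ x = Sum.inl (rightC r)) ∨
      (leftC r ≠ natSet 0 ∧ leftC r = natSet 1 ∧ x = Sum.inr (rightC r))) := hAδ
  constructor
  · -- boxplus ≤sc sqcup
    intro p hdom
    obtain ⟨x, hx, hne⟩ := hdom
    rcases (hAδ p x).mp hx with ⟨h0, rfl⟩ | ⟨hne0, h1, rfl⟩
    · -- case F
      have hFne : (F (rightC p)).Nonempty := by
        obtain ⟨⟨y1, y2⟩, hy⟩ := hne
        obtain ⟨w, hw, -⟩ := hy.1
        exact ⟨w, hw⟩
      refine ⟨p, turingLe_refl p, ⟨Sum.inl (rightC p), hx, ?_⟩, ?_⟩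
      · exact (Set.image_nonempty.mpr hFne)
      · intro q hq
        obtain ⟨x', hx', y, hy, hmem⟩ := hq
        have hx'' : x' = Sum.inl (rightC p) := Part.mem_unique hx' hx
        subst hx''
        have hmem' : y ∈ Sum.inl '' F (rightC p) := hmem
        obtain ⟨w, hw, hwy⟩ := hmem'
        rcases (hAδ' q y).mp hy with ⟨h0q, rfl⟩ | ⟨-, -, rfl⟩
        · -- y = Sum.inl (rightC q)
          have hwq : w = rightC q := Sum.inl.inj hwy
          subst hwq
          refine ⟨pairC (maEncode (rightC q)) zeroSeq,
            turingLe_pairC (turingLe_maEncode (turingLe_rightC q)) (turingLe_zeroSeq q),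
            Sum.inl (rightC p), hx,
            (some (rightC q), ((evalMA (rightC (pairC (maEncode (rightC q)) zeroSeq))).bind
              CantorSp.δ).toOption), ?_, ?_⟩
          · apply RepSp.mem_prod_iff.mpr
            refine ⟨some (rightC q), ?_, _, RepSp.mem_hat_iff.mpr rfl, rfl⟩
            apply RepSp.mem_hat_iff.mpr
            show some (rightC q) = ((evalMA (leftC (pairC (maEncode (rightC q))
              zeroSeq))).bind CantorSp.δ).toOption
            rw [leftC_pairC, hatCantor_val, if_pos (maEncode_total (rightC q)),
              eVal_maEncode]
          · exact ⟨⟨rightC q, hw, rfl⟩, trivial⟩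
        · exact absurd hwy (by simp)
    · -- case G
      have hGne : (G (rightC p)).Nonempty := by
        obtain ⟨⟨y1, y2⟩, hy⟩ := hne
        obtain ⟨w, hw, -⟩ := hy.2
        exact ⟨w, hw⟩
      refine ⟨p, turingLe_refl p, ⟨Sum.inr (rightC p), hx, ?_⟩, ?_⟩
      · exact (Set.image_nonempty.mpr hGne)
      · intro q hq
        obtain ⟨x', hx', y, hy, hmem⟩ := hq
        have hx'' : x' = Sum.inr (rightC p) := Part.mem_unique hx' hx
        subst hx''
        have hmem' : y ∈ Sum.inr '' G (rightC p) := hmem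
        obtain ⟨w, hw, hwy⟩ := hmem'
        rcases (hAδ' q y).mp hy with ⟨-, rfl⟩ | ⟨-, -, rfl⟩
        · exact absurd hwy (by simp)
        · have hwq : w = rightC q := Sum.inr.inj hwy
          subst hwq
          refine ⟨pairC zeroSeq (maEncode (rightC q)),
            turingLe_pairC (turingLe_zeroSeq q) (turingLe_maEncode (turingLe_rightC q)),
            Sum.inr (rightC p), hx,
            (((evalMA (leftC (pairC zeroSeq (maEncode (rightC q))))).bind
              CantorSp.δ).toOption, some (rightC q)), ?_, ?_⟩
          · apply RepSp.mem_prod_iff.mpr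
            refine ⟨_, RepSp.mem_hat_iff.mpr rfl, some (rightC q), ?_, rfl⟩
            apply RepSp.mem_hat_iff.mpr
            show some (rightC q) = ((evalMA (rightC (pairC zeroSeq
              (maEncode (rightC q))))).bind CantorSp.δ).toOption
            rw [rightC_pairC, hatCantor_val, if_pos (maEncode_total (rightC q)),
              eVal_maEncode]
          · exact ⟨trivial, ⟨rightC q, hw, rfl⟩⟩
  · -- sqcup ≤sc boxplus
    intro p hdom
    obtain ⟨x, hx, hne⟩ := hdom
    rcases (hAδ' p x).mp hx with ⟨h0, rfl⟩ | ⟨hne0, h1, rfl⟩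
    · have hFne : (F (rightC p)).Nonempty := by
        obtain ⟨y, w, hw, -⟩ := hne
        exact ⟨w, hw⟩
      refine ⟨p, turingLe_refl p, ⟨Sum.inl (rightC p), hx, ?_⟩, ?_⟩
      · obtain ⟨w, hw⟩ := hFne
        exact ⟨(some w, none), ⟨w, hw, rfl⟩, trivial⟩
      · intro q hq
        obtain ⟨x', hx', y, hy, hmem⟩ := hq
        have hx'' : x' = Sum.inl (rightC p) := Part.mem_unique hx' hx
        subst hx''
        obtain ⟨c₁, hc₁, c₂, hc₂, rfl⟩ := RepSp.mem_prod_iff.mp hy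
        have hmem' : (c₁, c₂) ∈ (Option.some '' F (rightC p)) ×ˢ
            (Set.univ : Set (Option Cantor)) := hmem
        obtain ⟨w, hw, hwc⟩ := hmem'.1
        have hc₁' : c₁ = ((evalMA (leftC q)).bind CantorSp.δ).toOption :=
          RepSp.mem_hat_iff.mp hc₁
        rw [hatCantor_val] at hc₁'
        by_cases hTMA : TotalMonotoneApprox (leftC q)
        · rw [if_pos hTMA] at hc₁'
          have hev : eVal (leftC q) = w := by
            rw [hc₁'] at hwc
            exact (Option.some_inj.mp hwc).symm
          refine ⟨inC 0 (eVal (leftC q)),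
            turingLe_pairC (turingLe_natSet 0 q) (turingLe_eval_leftC hTMA),
            Sum.inl (rightC p), hx, Sum.inl (eVal (leftC q)), ?_, ?_⟩
          · exact RepSp.mem_sum_inl (leftC_inC 0 _)
              (by rw [rightC_inC]; exact mem_cantor_iff.mpr rfl)
          · exact ⟨eVal (leftC q), hev ▸ hw, rfl⟩
        · rw [if_neg hTMA] at hc₁'
          rw [hc₁'] at hwc
          exact absurd hwc (by simp)
    · have hGne : (G (rightC p)).Nonempty := by
        obtain ⟨y, w, hw, -⟩ := hne
        exact ⟨w, hw⟩
      refine ⟨p, turingLe_refl p, ⟨Sum.inr (rightC p), hx, ?_⟩, ?_⟩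
      · obtain ⟨w, hw⟩ := hGne
        exact ⟨(none, some w), trivial, ⟨w, hw, rfl⟩⟩
      · intro q hq
        obtain ⟨x', hx', y, hy, hmem⟩ := hq
        have hx'' : x' = Sum.inr (rightC p) := Part.mem_unique hx' hx
        subst hx''
        obtain ⟨c₁, hc₁, c₂, hc₂, rfl⟩ := RepSp.mem_prod_iff.mp hy
        have hmem' : (c₁, c₂) ∈ (Set.univ : Set (Option Cantor)) ×ˢ
            (Option.some '' G (rightC p)) := hmem
        obtain ⟨w, hw, hwc⟩ := hmem'.2
        have hc₂' : c₂ = ((evalMA (rightC q)).bind CantorSp.δ).toOption :=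
          RepSp.mem_hat_iff.mp hc₂
        rw [hatCantor_val] at hc₂'
        by_cases hTMA : TotalMonotoneApprox (rightC q)
        · rw [if_pos hTMA] at hc₂'
          have hev : eVal (rightC q) = w := by
            rw [hc₂'] at hwc
            exact (Option.some_inj.mp hwc).symm
          refine ⟨inC 1 (eVal (rightC q)),
            turingLe_pairC (turingLe_natSet 1 q) (turingLe_eval_rightC hTMA),
            Sum.inr (rightC p), hx, Sum.inr (eVal (rightC q)), ?_, ?_⟩
          · exact RepSp.mem_sum_inr (leftC_inC 1 _)
              (by rw [rightC_inC]; exact mem_cantor_iff.mpr rfl)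
          · exact ⟨eVal (rightC q), hev ▸ hw, rfl⟩
        · rw [if_neg hTMA] at hc₂'
          rw [hc₂'] at hwc
          exact absurd hwc (by simp)
/-! ### Part 2: the lattice of strong computable degrees -/

lemma scLe_refl (f : MFn) : scLe f f :=
  fun p hp => ⟨p, turingLe_refl p, hp, fun q hq => ⟨q, turingLe_refl q, hq⟩⟩

lemma scLe_trans {f g h : MFn} (h1 : scLe f g) (h2 : scLe g h) : scLe f h := by
  intro p hp
  obtain ⟨p₁, hT1, hdom1, hback1⟩ := h1 p hp
  obtain ⟨p₂, hT2, hdom2, hback2⟩ := h2 p₁ hdom1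
  refine ⟨p₂, turingLe_trans hT2 hT1, hdom2, fun q hq => ?_⟩
  obtain ⟨z₁, hTz1, hs1⟩ := hback2 q hq
  obtain ⟨z, hTz, hs⟩ := hback1 z₁ hs1
  exact ⟨z, turingLe_trans hTz hTz1, hs⟩

lemma scLe_left_sqcup (f g : MFn) : scLe f (f.sqcup g) := by
  rintro p ⟨x, hx, hne⟩
  have hmemA : (Sum.inl x : (f.sqcup g).A.X) ∈ (f.sqcup g).A.δ (inC 0 p) :=
    RepSp.mem_sum_inl (leftC_inC 0 p) (by rw [rightC_inC]; exact hx)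
  refine ⟨inC 0 p, turingLe_inC 0 (turingLe_refl p), ⟨Sum.inl x, hmemA, ?_⟩, ?_⟩
  · exact Set.image_nonempty.mpr hne
  · intro q hq
    obtain ⟨x', hx', y, hy, hmem⟩ := hq
    have hxx : x' = Sum.inl x := Part.mem_unique hx' hmemA
    subst hxx
    have hmem' : y ∈ Sum.inl '' f.f x := hmem
    obtain ⟨w, hw, rfl⟩ := hmem'
    rcases RepSp.mem_sum_iff.mp hy with ⟨h0, a, ha, heq⟩ | ⟨-, -, b, hb, heq⟩
    · have haw : a = w := (Sum.inl.inj heq).symm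
      subst haw
      exact ⟨rightC q, turingLe_rightC q, x, hx, a, ha, hw⟩
    · exact absurd heq (by simp)

lemma scLe_right_sqcup (f g : MFn) : scLe g (f.sqcup g) := by
  rintro p ⟨x, hx, hne⟩
  have hmemA : (Sum.inr x : (f.sqcup g).A.X) ∈ (f.sqcup g).A.δ (inC 1 p) :=
    RepSp.mem_sum_inr (leftC_inC 1 p) (by rw [rightC_inC]; exact hx)
  refine ⟨inC 1 p, turingLe_inC 1 (turingLe_refl p), ⟨Sum.inr x, hmemA, ?_⟩, ?_⟩
  · exact Set.image_nonempty.mpr hne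
  · intro q hq
    obtain ⟨x', hx', y, hy, hmem⟩ := hq
    have hxx : x' = Sum.inr x := Part.mem_unique hx' hmemA
    subst hxx
    have hmem' : y ∈ Sum.inr '' g.f x := hmem
    obtain ⟨w, hw, rfl⟩ := hmem'
    rcases RepSp.mem_sum_iff.mp hy with ⟨-, a, ha, heq⟩ | ⟨-, h1, b, hb, heq⟩
    · exact absurd heq (by simp)
    · have hbw : b = w := (Sum.inr.inj heq).symm
      subst hbw
      exact ⟨rightC q, turingLe_rightC q, x, hx, b, hb, hw⟩

lemma scLe_sqcup_lub {f g h : MFn} (hf : scLe f h) (hg : scLe g h) :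
    scLe (f.sqcup g) h := by
  rintro p ⟨x, hx, hne⟩
  rcases RepSp.mem_sum_iff.mp hx with ⟨h0, a, ha, rfl⟩ | ⟨hne0, h1, b, hb, rfl⟩
  · have hfne : (f.f a).Nonempty := Set.image_nonempty.mp hne
    obtain ⟨p₁, hT, hdom, hback⟩ := hf (rightC p) ⟨a, ha, hfne⟩
    refine ⟨p₁, turingLe_trans hT (turingLe_rightC p), hdom, fun q hq => ?_⟩
    obtain ⟨z, hTz, x', hx', y, hy, hmem⟩ := hback q hq
    have hxa : x' = a := Part.mem_unique hx' ha
    subst hxa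
    refine ⟨inC 0 z, turingLe_inC 0 hTz, Sum.inl x', hx, Sum.inl y, ?_, ?_⟩
    · exact RepSp.mem_sum_inl (leftC_inC 0 z) (by rw [rightC_inC]; exact hy)
    · exact ⟨y, hmem, rfl⟩
  · have hgne : (g.f b).Nonempty := Set.image_nonempty.mp hne
    obtain ⟨p₁, hT, hdom, hback⟩ := hg (rightC p) ⟨b, hb, hgne⟩
    refine ⟨p₁, turingLe_trans hT (turingLe_rightC p), hdom, fun q hq => ?_⟩
    obtain ⟨z, hTz, x', hx', y, hy, hmem⟩ := hback q hq
    have hxb : x' = b := Part.mem_unique hx' hb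
    subst hxb
    refine ⟨inC 1 z, turingLe_inC 1 hTz, Sum.inr x', hx, Sum.inr y, ?_, ?_⟩
    · exact RepSp.mem_sum_inr (leftC_inC 1 z) (by rw [rightC_inC]; exact hy)
    · exact ⟨y, hmem, rfl⟩

lemma sqcap_f_eq (f g : MFn) (a : f.A.X) (b : g.A.X) :
    (f.sqcap g).f (a, b) = if (f.f a).Nonempty ∧ (g.f b).Nonempty then
      (Sum.inl '' f.f a) ∪ (Sum.inr '' g.f b) else ∅ := rfl

lemma sqcap_cond {f g : MFn} {a : f.A.X} {b : g.A.X}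
    (hne : ((f.sqcap g).f (a, b)).Nonempty) :
    (f.f a).Nonempty ∧ (g.f b).Nonempty := by
  by_contra hc
  rw [sqcap_f_eq, if_neg hc] at hne
  exact Set.not_nonempty_empty hne

lemma scLe_sqcap_left (f g : MFn) : scLe (f.sqcap g) f := by
  rintro p ⟨x, hx, hne⟩
  obtain ⟨a, ha, b, hb, rfl⟩ := RepSp.mem_prod_iff.mp hx
  obtain ⟨hfa, hgb⟩ := sqcap_cond hne
  refine ⟨leftC p, turingLe_leftC p, ⟨a, ha, hfa⟩, fun q hq => ?_⟩
  obtain ⟨x', hx', y, hy, hmem⟩ := hq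
  have hxa : x' = a := Part.mem_unique hx' ha
  subst hxa
  refine ⟨inC 0 q, turingLe_inC 0 (turingLe_refl q), (x', b), hx, Sum.inl y, ?_, ?_⟩
  · exact RepSp.mem_sum_inl (leftC_inC 0 q) (by rw [rightC_inC]; exact hy)
  · rw [sqcap_f_eq, if_pos ⟨hfa, hgb⟩]
    exact Or.inl ⟨y, hmem, rfl⟩

lemma scLe_sqcap_right (f g : MFn) : scLe (f.sqcap g) g := by
  rintro p ⟨x, hx, hne⟩
  obtain ⟨a, ha, b, hb, rfl⟩ := RepSp.mem_prod_iff.mp hx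
  obtain ⟨hfa, hgb⟩ := sqcap_cond hne
  refine ⟨rightC p, turingLe_rightC p, ⟨b, hb, hgb⟩, fun q hq => ?_⟩
  obtain ⟨x', hx', y, hy, hmem⟩ := hq
  have hxb : x' = b := Part.mem_unique hx' hb
  subst hxb
  refine ⟨inC 1 q, turingLe_inC 1 (turingLe_refl q), (a, x'), hx, Sum.inr y, ?_, ?_⟩
  · exact RepSp.mem_sum_inr (leftC_inC 1 q) (by rw [rightC_inC]; exact hy)
  · rw [sqcap_f_eq, if_pos ⟨hfa, hgb⟩]
    exact Or.inr ⟨y, hmem, rfl⟩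

lemma scLe_sqcap_glb {f g h : MFn} (hf : scLe h f) (hg : scLe h g) :
    scLe h (f.sqcap g) := by
  intro p hp
  obtain ⟨p₁, hT1, ⟨x₁, hx₁, hne₁⟩, hback₁⟩ := hf p hp
  obtain ⟨p₂, hT2, ⟨x₂, hx₂, hne₂⟩, hback₂⟩ := hg p hp
  have hmemA : ((x₁, x₂) : (f.sqcap g).A.X) ∈ (f.sqcap g).A.δ (pairC p₁ p₂) :=
    RepSp.mem_prod_iff.mpr ⟨x₁, by rw [leftC_pairC]; exact hx₁,
      x₂, by rw [rightC_pairC]; exact hx₂, rfl⟩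
  refine ⟨pairC p₁ p₂, turingLe_pairC hT1 hT2, ⟨(x₁, x₂), hmemA, ?_⟩, ?_⟩
  · rw [sqcap_f_eq, if_pos ⟨hne₁, hne₂⟩]
    obtain ⟨w, hw⟩ := hne₁
    exact ⟨Sum.inl w, Or.inl ⟨w, hw, rfl⟩⟩
  · intro q hq
    obtain ⟨x', hx', y, hy, hmem⟩ := hq
    have hxx : x' = (x₁, x₂) := Part.mem_unique hx' hmemA
    subst hxx
    rw [sqcap_f_eq, if_pos ⟨hne₁, hne₂⟩] at hmem
    rcases RepSp.mem_sum_iff.mp hy with ⟨h0, a, ha, heq⟩ | ⟨-, h1, b, hb, heq⟩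
    · subst heq
      rcases hmem with ⟨w, hw, hweq⟩ | ⟨w, hw, hweq⟩
      · have haw : a = w := (Sum.inl.inj hweq).symm
        subst haw
        obtain ⟨z, hTz, hs⟩ := hback₁ (rightC q) ⟨x₁, hx₁, a, ha, hw⟩
        exact ⟨z, turingLe_trans hTz (turingLe_rightC q), hs⟩
      · exact absurd hweq (by simp)
    · subst heq
      rcases hmem with ⟨w, hw, hweq⟩ | ⟨w, hw, hweq⟩
      · exact absurd hweq (by simp)
      · have hbw : b = w := (Sum.inr.inj hweq).symm
        subst hbw
        obtain ⟨z, hTz, hs⟩ := hback₂ (rightC q) ⟨x₂, hx₂, b, hb, hw⟩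
        exact ⟨z, turingLe_trans hTz (turingLe_rightC q), hs⟩
lemma scLe_distrib (f g h : MFn) :
    scLe ((f.sqcup g).sqcap h) ((f.sqcap h).sqcup (g.sqcap h)) := by
  rintro p ⟨x, hx, hne⟩
  obtain ⟨xl, hxl, xh, hxh, rfl⟩ := RepSp.mem_prod_iff.mp hx
  obtain ⟨hlne, hhne⟩ := sqcap_cond hne
  rcases RepSp.mem_sum_iff.mp hxl with ⟨h0, a, ha, rfl⟩ | ⟨hne0, h1, a, ha, rfl⟩
  · -- case f
    have hfa : (f.f a).Nonempty := Set.image_nonempty.mp hlne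
    have hT : TuringLe (inC 0 (pairC (rightC (leftC p)) (rightC p))) p :=
      turingLe_inC 0 (turingLe_pairC
        (turingLe_trans (turingLe_rightC (leftC p)) (turingLe_leftC p))
        (turingLe_rightC p))
    have hmemA : (Sum.inl (a, xh) : ((f.sqcap h).sqcup (g.sqcap h)).A.X)
        ∈ ((f.sqcap h).sqcup (g.sqcap h)).A.δ
          (inC 0 (pairC (rightC (leftC p)) (rightC p))) := by
      apply RepSp.mem_sum_inl (leftC_inC 0 _)
      rw [rightC_inC]
      exact RepSp.mem_prod_iff.mpr ⟨a, by rw [leftC_pairC]; exact ha,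
        xh, by rw [rightC_pairC]; exact hxh, rfl⟩
    refine ⟨inC 0 (pairC (rightC (leftC p)) (rightC p)), hT,
      ⟨Sum.inl (a, xh), hmemA, ?_⟩, ?_⟩
    · apply Set.image_nonempty.mpr
      rw [sqcap_f_eq, if_pos ⟨hfa, hhne⟩]
      obtain ⟨w, hw⟩ := hfa
      exact ⟨Sum.inl w, Or.inl ⟨w, hw, rfl⟩⟩
    · intro q hq
      obtain ⟨x', hx', y, hy, hmem⟩ := hq
      have hxx : x' = Sum.inl (a, xh) := Part.mem_unique hx' hmemA
      subst hxx
      have hmem' : y ∈ Sum.inl '' (f.sqcap h).f (a, xh) := hmem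
      obtain ⟨y', hy', rfl⟩ := hmem'
      rw [sqcap_f_eq, if_pos ⟨hfa, hhne⟩] at hy'
      rcases RepSp.mem_sum_iff.mp hy with ⟨h0q, u, hu, hequ⟩ | ⟨-, -, u, hu, hequ⟩
      swap
      · exact absurd hequ (by simp)
      have huy : u = y' := (Sum.inl.inj hequ).symm
      subst huy
      rcases hy' with ⟨w, hw, rfl⟩ | ⟨w, hw, rfl⟩
      · -- f-solution
        rcases RepSp.mem_sum_iff.mp hu with ⟨h0r, v, hv, heqv⟩ | ⟨-, -, v, hv, heqv⟩
        swap
        · exact absurd heqv (by simp)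
        have hvw : v = w := (Sum.inl.inj heqv).symm
        subst hvw
        refine ⟨inC 0 (inC 0 (rightC (rightC q))),
          turingLe_inC 0 (turingLe_inC 0 (turingLe_trans (turingLe_rightC (rightC q))
            (turingLe_rightC q))),
          (Sum.inl a, xh), hx, Sum.inl (Sum.inl v), ?_, ?_⟩
        · apply RepSp.mem_sum_inl (leftC_inC 0 _)
          rw [rightC_inC]
          exact RepSp.mem_sum_inl (leftC_inC 0 _) (by rw [rightC_inC]; exact hv)
        · erw [sqcap_f_eq]; rw [if_pos ⟨hlne, hhne⟩]
          exact Or.inl ⟨Sum.inl v, ⟨v, hw, rfl⟩, rfl⟩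
      · -- h-solution
        rcases RepSp.mem_sum_iff.mp hu with ⟨-, v, hv, heqv⟩ | ⟨-, h1r, v, hv, heqv⟩
        · exact absurd heqv (by simp)
        have hvw : v = w := (Sum.inr.inj heqv).symm
        subst hvw
        refine ⟨inC 1 (rightC (rightC q)),
          turingLe_inC 1 (turingLe_trans (turingLe_rightC (rightC q))
            (turingLe_rightC q)),
          (Sum.inl a, xh), hx, Sum.inr v, ?_, ?_⟩
        · exact RepSp.mem_sum_inr (leftC_inC 1 _) (by rw [rightC_inC]; exact hv)
        · erw [sqcap_f_eq]; rw [if_pos ⟨hlne, hhne⟩]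
          exact Or.inr ⟨v, hw, rfl⟩
  · -- case g
    have hga : (g.f a).Nonempty := Set.image_nonempty.mp hlne
    have hT : TuringLe (inC 1 (pairC (rightC (leftC p)) (rightC p))) p :=
      turingLe_inC 1 (turingLe_pairC
        (turingLe_trans (turingLe_rightC (leftC p)) (turingLe_leftC p))
        (turingLe_rightC p))
    have hmemA : (Sum.inr (a, xh) : ((f.sqcap h).sqcup (g.sqcap h)).A.X)
        ∈ ((f.sqcap h).sqcup (g.sqcap h)).A.δ
          (inC 1 (pairC (rightC (leftC p)) (rightC p))) := by
      apply RepSp.mem_sum_inr (leftC_inC 1 _)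
      rw [rightC_inC]
      exact RepSp.mem_prod_iff.mpr ⟨a, by rw [leftC_pairC]; exact ha,
        xh, by rw [rightC_pairC]; exact hxh, rfl⟩
    refine ⟨inC 1 (pairC (rightC (leftC p)) (rightC p)), hT,
      ⟨Sum.inr (a, xh), hmemA, ?_⟩, ?_⟩
    · apply Set.image_nonempty.mpr
      rw [sqcap_f_eq, if_pos ⟨hga, hhne⟩]
      obtain ⟨w, hw⟩ := hga
      exact ⟨Sum.inl w, Or.inl ⟨w, hw, rfl⟩⟩
    · intro q hq
      obtain ⟨x', hx', y, hy, hmem⟩ := hq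
      have hxx : x' = Sum.inr (a, xh) := Part.mem_unique hx' hmemA
      subst hxx
      have hmem' : y ∈ Sum.inr '' (g.sqcap h).f (a, xh) := hmem
      obtain ⟨y', hy', rfl⟩ := hmem'
      rw [sqcap_f_eq, if_pos ⟨hga, hhne⟩] at hy'
      rcases RepSp.mem_sum_iff.mp hy with ⟨-, u, hu, hequ⟩ | ⟨-, h1q, u, hu, hequ⟩
      · exact absurd hequ (by simp)
      have huy : u = y' := (Sum.inr.inj hequ).symm
      subst huy
      rcases hy' with ⟨w, hw, rfl⟩ | ⟨w, hw, rfl⟩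
      · -- g-solution
        rcases RepSp.mem_sum_iff.mp hu with ⟨h0r, v, hv, heqv⟩ | ⟨-, -, v, hv, heqv⟩
        swap
        · exact absurd heqv (by simp)
        have hvw : v = w := (Sum.inl.inj heqv).symm
        subst hvw
        refine ⟨inC 0 (inC 1 (rightC (rightC q))),
          turingLe_inC 0 (turingLe_inC 1 (turingLe_trans (turingLe_rightC (rightC q))
            (turingLe_rightC q))),
          (Sum.inr a, xh), hx, Sum.inl (Sum.inr v), ?_, ?_⟩
        · apply RepSp.mem_sum_inl (leftC_inC 0 _)
          rw [rightC_inC]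
          exact RepSp.mem_sum_inr (leftC_inC 1 _) (by rw [rightC_inC]; exact hv)
        · erw [sqcap_f_eq]; rw [if_pos ⟨hlne, hhne⟩]
          exact Or.inl ⟨Sum.inr v, ⟨v, hw, rfl⟩, rfl⟩
      · -- h-solution
        rcases RepSp.mem_sum_iff.mp hu with ⟨-, v, hv, heqv⟩ | ⟨-, h1r, v, hv, heqv⟩
        · exact absurd heqv (by simp)
        have hvw : v = w := (Sum.inr.inj heqv).symm
        subst hvw
        refine ⟨inC 1 (rightC (rightC q)),
          turingLe_inC 1 (turingLe_trans (turingLe_rightC (rightC q))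
            (turingLe_rightC q)),
          (Sum.inr a, xh), hx, Sum.inr v, ?_, ?_⟩
        · exact RepSp.mem_sum_inr (leftC_inC 1 _) (by rw [rightC_inC]; exact hv)
        · erw [sqcap_f_eq]; rw [if_pos ⟨hlne, hhne⟩]
          exact Or.inr ⟨v, hw, rfl⟩

lemma scLe_distrib' (f g h : MFn) :
    scLe ((f.sqcap h).sqcup (g.sqcap h)) ((f.sqcup g).sqcap h) :=
  scLe_sqcup_lub
    (scLe_sqcap_glb (scLe_trans (scLe_sqcap_left f h) (scLe_left_sqcup f g))
      (scLe_sqcap_right f h))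
    (scLe_sqcap_glb (scLe_trans (scLe_sqcap_left g h) (scLe_right_sqcup f g))
      (scLe_sqcap_right g h))

/-- The setoid of strong computable equivalence. -/
def scSetoid : Setoid MFn :=
  ⟨scEq, fun f => ⟨scLe_refl f, scLe_refl f⟩, fun h => ⟨h.2, h.1⟩,
    fun h1 h2 => ⟨scLe_trans h1.1 h2.1, scLe_trans h2.2 h1.2⟩⟩

/-- The strong computable degrees. -/
def ScDeg : Type 1 := Quotient scSetoid

def scDegLe : ScDeg → ScDeg → Prop :=
  Quotient.lift₂ scLe (fun f g f' g' hf hg => propext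
    ⟨fun h => scLe_trans (scLe_trans hf.2 h) hg.1,
     fun h => scLe_trans (scLe_trans hf.1 h) hg.2⟩)


/-- Remark 4.7: `f ⊞ g ≡_sc f ⊔ g` for partial multifunctions on Cantor
space, and the strong computable degrees form a distributive lattice with `⊔` as join and
`⊓` as meet. -/
theorem stmt18 :
    (∀ F G : Cantor → Set Cantor,
      scEq ((ofCantor F).boxplus (ofCantor G)) ((ofCantor F).sqcup (ofCantor G))) ∧
    ∃ (D : Type 1) (le : D → D → Prop) (φ : MFn → D),
      Function.Surjective φ ∧ IsPartialOrder D le ∧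
      (∀ f g, φ f = φ g ↔ scEq f g) ∧
      (∀ f g, le (φ f) (φ g) ↔ scLe f g) ∧
      (∀ f g, le (φ f) (φ (f.sqcup g)) ∧ le (φ g) (φ (f.sqcup g)) ∧
        ∀ h, le (φ f) (φ h) → le (φ g) (φ h) → le (φ (f.sqcup g)) (φ h)) ∧
      (∀ f g, le (φ (f.sqcap g)) (φ f) ∧ le (φ (f.sqcap g)) (φ g) ∧
        ∀ h, le (φ h) (φ f) → le (φ h) (φ g) → le (φ h) (φ (f.sqcap g))) ∧
      (∀ f g h : MFn, φ ((f.sqcup g).sqcap h) = φ ((f.sqcap h).sqcup (g.sqcap h))) := by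
  refine ⟨boxplus_scEq_sqcup, ScDeg, scDegLe, Quotient.mk scSetoid, ?_, ?_, ?_, ?_, ?_, ?_, ?_⟩
  · intro a
    induction a using Quotient.inductionOn with
    | h f => exact ⟨f, rfl⟩
  · refine { refl := ?_, trans := ?_, antisymm := ?_ }
    · intro a
      induction a using Quotient.inductionOn with
      | h f => exact scLe_refl f
    · intro a b c hab hbc
      induction a using Quotient.inductionOn with
      | h f =>
        induction b using Quotient.inductionOn with
        | h g =>
          induction c using Quotient.inductionOn with
          | h k => exact scLe_trans (f := f) (g := g) (h := k) hab hbc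
    · intro a b hab hba
      induction a using Quotient.inductionOn with
      | h f =>
        induction b using Quotient.inductionOn with
        | h g => exact Quotient.sound ⟨hab, hba⟩
  · intro f g
    exact ⟨fun h => Quotient.exact h, fun h => Quotient.sound h⟩
  · intro f g
    exact Iff.rfl
  · intro f g
    exact ⟨scLe_left_sqcup f g, scLe_right_sqcup f g,
      fun h h1 h2 => scLe_sqcup_lub h1 h2⟩
  · intro f g
    exact ⟨scLe_sqcap_left f g, scLe_sqcap_right f g,
      fun h h1 h2 => scLe_sqcap_glb h1 h2⟩
  · intro f g h
    exact Quotient.sound ⟨scLe_distrib f g h, scLe_distrib' f g h⟩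


end

end StrongWeihrauch
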